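/- Let q be a real number with Δ_k(q) ≠ 0 for 1 ≤ k ≤ n. For every noncrossing half-diagram 𝔞 on n points with p arcs, ξ′_𝔞 − ξ_𝔞 lies in the span of {ξ_𝔟 : 𝔟 a half-diagram with p arcs, 𝔟 ≠ 𝔞, and h_i(𝔟) ≤ h_i(𝔞) for all i}; that is, ξ′_𝔞 equals ξ_𝔞 plus a linear combination of basis vectors indexed by half-diagrams strictly below 𝔞 in the height-domination order. -/

import Mathlib

open scoped BigOperators

/-- A noncrossing half-diagram on `n` points (realized as `Fin n`): a partial matching
of `{1,…,n}` into two-element arcs, with no crossing pair of arcs and no through-string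
(unmatched point) lying strictly inside an arc. -/
structure HalfDiag (n : ℕ) where
  arcs : Finset (Finset (Fin n))
  two : ∀ a ∈ arcs, a.card = 2
  disj : ∀ a ∈ arcs, ∀ b ∈ arcs, a ≠ b → Disjoint a b
  nc1 : ∀ a ∈ arcs, ∀ b ∈ arcs, ∀ i j k l : Fin n,
      i ∈ a → j ∈ a → k ∈ b → l ∈ b → i < k → k < j → j < l → False
  nc2 : ∀ a ∈ arcs, ∀ i j : Fin n, i ∈ a → j ∈ a →
      ∀ k : Fin n, (∀ b ∈ arcs, k ∉ b) → i < k → k < j → False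

noncomputable section

attribute [local instance] Classical.propDecidable

/-- `x` is matched (covered by an arc) in the arc set `A`. -/
def covered {n : ℕ} (A : Finset (Finset (Fin n))) (x : Fin n) : Prop :=
  ∃ c ∈ A, x ∈ c

/-- The arc set obtained from `A` by the Temperley–Lieb action at the pair `(x, y)`:
insert the arc `{x, y}`, keep all arcs disjoint from `{x, y}`, and if both `x` and `y`
were matched (to `j` and `k` say), add the arc `{j, k}`; a single former partner
becomes a through-string. -/
def newArcs {n : ℕ} (x y : Fin n) (A : Finset (Finset (Fin n))) :
    Finset (Finset (Fin n)) :=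
  let P := ((A.filter fun c => x ∈ c ∨ y ∈ c).biUnion id) \ {x, y}
  insert {x, y} ((A.filter fun c => x ∉ c ∧ y ∉ c) ∪ (if P.card = 2 then {P} else ∅))

/-- The complex vector space with basis the noncrossing half-diagrams on `n` points. -/
abbrev V (n : ℕ) := HalfDiag n →₀ ℂ

/-- The basis vector of `V n` indexed by the half-diagram `a`. -/
def xi {n : ℕ} (a : HalfDiag n) : V n := Finsupp.single a 1

/-- The action of the Temperley–Lieb generator `E_i` (`1 ≤ i ≤ n−1`, acting on the
points `i`, `i+1`, i.e. the `Fin n` values `i−1`, `i`) on a basis vector. -/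
def Eact (q : ℂ) {n : ℕ} (i : ℕ) (a : HalfDiag n) : V n :=
  if h : 1 ≤ i ∧ i < n then
    let x : Fin n := ⟨i - 1, by omega⟩
    let y : Fin n := ⟨i, h.2⟩
    if ({x, y} : Finset (Fin n)) ∈ a.arcs then q • xi a
    else if ¬ covered a.arcs x ∧ ¬ covered a.arcs y then 0
    else if hb : ∃ b : HalfDiag n, b.arcs = newArcs x y a.arcs then xi hb.choose
    else 0
  else 0

/-- The linear map `E_i` on `V n`. -/
def Eop (q : ℂ) (n : ℕ) (i : ℕ) : V n →ₗ[ℂ] V n :=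
  Finsupp.lsum ℂ fun a => LinearMap.toSpanSingleton ℂ (V n) (Eact q i a)

/-- The encoding of a half-diagram: `-1` at the larger point of each arc,
`+1` elsewhere (through-strings and smaller points of arcs). -/
def encode {n : ℕ} (a : HalfDiag n) : Fin n → ℤ := fun i =>
  if ∃ c ∈ a.arcs, i ∈ c ∧ ∃ j ∈ c, j < i then -1 else 1

/-- The height `h_i(a) = i − 2·(number of arcs of `a` contained in the first `i`
points)`. -/
def ht {n : ℕ} (a : HalfDiag n) (i : ℕ) : ℤ :=
  (i : ℤ) - 2 * ((a.arcs.filter fun c => ∀ x : Fin n, x ∈ c → (x : ℕ) < i).card : ℤ)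

/-- `b` is obtained from `a` by box addition at `i`: `a` has a minimum at `i`,
`h_i(b) = h_i(a) + 2`, and all other heights agree. -/
def IsBoxAdd {n : ℕ} (a b : HalfDiag n) (i : ℕ) : Prop :=
  1 ≤ i ∧ i + 1 ≤ n ∧ ht a i < ht a (i - 1) ∧ ht a i < ht a (i + 1) ∧
  ht b i = ht a i + 2 ∧ ∀ j ≤ n, j ≠ i → ht b j = ht a j

/-- `m` is the minimal half-diagram with `p` arcs: its arcs are
`{1,2}, {3,4}, …, {2p−1, 2p}` (zero-based: `{2j, 2j+1}` for `j < p`). -/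
def IsMinDiag {n : ℕ} (p : ℕ) (m : HalfDiag n) : Prop :=
  m.arcs.card = p ∧ ∀ c ∈ m.arcs, ∃ x y : Fin n, c = {x, y} ∧
    (y : ℕ) = (x : ℕ) + 1 ∧ (x : ℕ) % 2 = 0 ∧ (x : ℕ) < 2 * p

/-- `Δ k q` is the value at `q/2` of the degree-`k` Chebyshev polynomial of the
second kind. -/
def Delta (k : ℤ) (q : ℝ) : ℝ :=
  (Polynomial.Chebyshev.U ℝ k).eval (q / 2)

/-- `μ k q = Δ_{k-1}(q) / Δ_k(q)`. -/
def mu (k : ℤ) (q : ℝ) : ℝ :=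
  Delta (k - 1) q / Delta k q

/-- The vector obtained from `ξ_{d 0}` by applying the white box addition operators
`E_{i_k} − μ_{h_{i_k}(d (k−1)) + 1}` along the chain `d` with box-addition
positions `idx`. -/
def chainVec (q : ℝ) {n : ℕ} (d : ℕ → HalfDiag n) (idx : ℕ → ℕ) : ℕ → V n
  | 0 => xi (d 0)
  | k + 1 =>
      Eop (q : ℂ) n (idx (k + 1)) (chainVec q d idx k)
        - ((mu (ht (d k) (idx (k + 1)) + 1) q : ℝ) : ℂ) • chainVec q d idx k

/-- `d, idx` is a chain of `r` box additions from the minimal half-diagram with `p`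
arcs to `a`. -/
def IsChainTo {n : ℕ} (p r : ℕ) (d : ℕ → HalfDiag n) (idx : ℕ → ℕ)
    (a : HalfDiag n) : Prop :=
  IsMinDiag p (d 0) ∧ d r = a ∧ ∀ k < r, IsBoxAdd (d k) (d (k + 1)) (idx (k + 1))

/-- Adjacency in the multigraph union of the arcs of `a` and the arcs of `b`. -/
def unionAdj {n : ℕ} (a b : HalfDiag n) (x y : Fin n) : Prop :=
  x ≠ y ∧ (({x, y} : Finset (Fin n)) ∈ a.arcs ∨ ({x, y} : Finset (Fin n)) ∈ b.arcs)

/-- The connected component of `v` in the union multigraph of `a` and `b`. -/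
def comp {n : ℕ} (a b : HalfDiag n) (v : Fin n) : Set (Fin n) :=
  {w | Relation.ReflTransGen (unionAdj a b) v w}

/-- Every path component of the union multigraph joins a through-string of `a` to a
through-string of `b`: equivalently, each component contains at most one point
unmatched in `a` and at most one point unmatched in `b`. -/
def goodPair {n : ℕ} (a b : HalfDiag n) : Prop :=
  (∀ v w₁ w₂ : Fin n, w₁ ∈ comp a b v → w₂ ∈ comp a b v →
      ¬ covered a.arcs w₁ → ¬ covered a.arcs w₂ → w₁ = w₂) ∧
  (∀ v w₁ w₂ : Fin n, w₁ ∈ comp a b v → w₂ ∈ comp a b v →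
      ¬ covered b.arcs w₁ → ¬ covered b.arcs w₂ → w₁ = w₂)

/-- The set of cycle components of the union multigraph: components all of whose
points are matched in both `a` and `b`. -/
def cycleComps {n : ℕ} (a b : HalfDiag n) : Set (Set (Fin n)) :=
  {C | ∃ v : Fin n, C = comp a b v ∧ ∀ w ∈ C, covered a.arcs w ∧ covered b.arcs w}

/-- The inner product of two basis diagrams: `q^c` with `c` the number of closed
loops if every path joins a through-string of `a` to a through-string of `b`, and
`0` otherwise. -/
def inner0 (q : ℝ) {n : ℕ} (a b : HalfDiag n) : ℂ :=
  if goodPair a b then (q : ℂ) ^ (cycleComps a b).ncard else 0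

/-- The sesquilinear form on `V n` (conjugate-linear in the second argument)
extending `inner0`. -/
def form (q : ℝ) {n : ℕ} (v w : V n) : ℂ :=
  ∑ a ∈ v.support, ∑ b ∈ w.support, v a * (starRingEnd ℂ) (w b) * inner0 q a b

/-- The descent-height sequence of a `±1`-sequence: the list of partial sums just
before each `-1`, in increasing order of position. -/
def descHeights (n : ℕ) (ε : Fin n → ℤ) : List ℤ :=
  ((List.finRange n).filter fun i => decide (ε i = -1)).map
    fun i => ∑ k ∈ Finset.univ.filter (fun k => k < i), ε k

end
noncomputable section AuxTriangular
attribute [local instance] Classical.propDecidable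

namespace AuxTri

variable {n : ℕ}

theorem HalfDiag.ext' {a b : HalfDiag n} (h : a.arcs = b.arcs) : a = b := by
  cases a; cases b; simp_all

theorem arc_pair (a : HalfDiag n) {c} (hc : c ∈ a.arcs) :
    ∃ u v : Fin n, u < v ∧ c = {u, v} := by
  have h2 := a.two c hc
  rw [Finset.card_eq_two] at h2
  obtain ⟨u, v, huv, rfl⟩ := h2
  rcases lt_or_gt_of_ne huv with h | h
  · exact ⟨u, v, h, rfl⟩
  · exact ⟨v, u, h, by rw [Finset.pair_comm]⟩

theorem arc_unique (a : HalfDiag n) {c c'} (hc : c ∈ a.arcs) (hc' : c' ∈ a.arcs)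
    {x : Fin n} (hx : x ∈ c) (hx' : x ∈ c') : c = c' := by
  by_contra h
  exact (Finset.disjoint_left.mp (a.disj c hc c' hc' h) hx) hx'

theorem arc_nc (a : HalfDiag n) {u v s t : Fin n}
    (h1 : ({u, v} : Finset (Fin n)) ∈ a.arcs) (h2 : ({s, t} : Finset (Fin n)) ∈ a.arcs)
    (hus : u < s) (hsv : s < v) (hvt : v < t) : False :=
  a.nc1 _ h1 _ h2 u v s t (by simp) (by simp) (by simp) (by simp) hus hsv hvt

theorem arc_through (a : HalfDiag n) {u v k : Fin n}
    (h1 : ({u, v} : Finset (Fin n)) ∈ a.arcs) (huk : u < k) (hkv : k < v)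
    (hk : ¬ covered a.arcs k) : False :=
  a.nc2 _ h1 u v (by simp) (by simp) k (fun b hb hkb => hk ⟨b, hb, hkb⟩) huk hkv

theorem covered_ex (a : HalfDiag n) {x : Fin n} (h : covered a.arcs x) :
    ∃ j : Fin n, j ≠ x ∧ ({x, j} : Finset (Fin n)) ∈ a.arcs := by
  obtain ⟨c, hc, hxc⟩ := h
  obtain ⟨u, v, huv, rfl⟩ := arc_pair a hc
  rcases Finset.mem_insert.mp hxc with rfl | hv
  · exact ⟨v, huv.ne', hc⟩
  · rcases Finset.mem_singleton.mp hv with rfl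
    exact ⟨u, huv.ne, by rwa [Finset.pair_comm]⟩

theorem pair_eq_iff {u v s t : Fin n} :
    ({u, v} : Finset (Fin n)) = {s, t} ↔ (u = s ∧ v = t) ∨ (u = t ∧ v = s) := by
  constructor
  · intro h
    have hu : u = s ∨ u = t := by
      have : u ∈ ({s, t} : Finset (Fin n)) := h ▸ (by simp)
      simpa using this
    have hv : v = s ∨ v = t := by
      have : v ∈ ({s, t} : Finset (Fin n)) := h ▸ (by simp)
      simpa using this
    have hs : s = u ∨ s = v := by
      have : s ∈ ({u, v} : Finset (Fin n)) := by rw [h]; simp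
      simpa using this
    have ht' : t = u ∨ t = v := by
      have : t ∈ ({u, v} : Finset (Fin n)) := by rw [h]; simp
      simpa using this
    tauto
  · rintro (⟨rfl, rfl⟩ | ⟨rfl, rfl⟩)
    · rfl
    · rw [Finset.pair_comm]

/-- `t` is the larger endpoint of some arc. -/
def isMax (a : HalfDiag n) (t : Fin n) : Prop :=
  ∃ j : Fin n, j < t ∧ ({j, t} : Finset (Fin n)) ∈ a.arcs

theorem ht_step (a : HalfDiag n) (t : ℕ) (htn : t < n) :
    ht a (t + 1) = ht a t + (if isMax a ⟨t, htn⟩ then -1 else 1) := by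
  classical
  set T : Fin n := ⟨t, htn⟩ with hT
  have key : (a.arcs.filter fun c => ∀ x : Fin n, x ∈ c → (x : ℕ) < t + 1).card
      = (a.arcs.filter fun c => ∀ x : Fin n, x ∈ c → (x : ℕ) < t).card
        + (if isMax a T then 1 else 0) := by
    split_ifs with hM
    · obtain ⟨j, hj, hjT⟩ := hM
      have hstep : (a.arcs.filter fun c => ∀ x : Fin n, x ∈ c → (x : ℕ) < t + 1)
          = insert ({j, T} : Finset (Fin n))
            (a.arcs.filter fun c => ∀ x : Fin n, x ∈ c → (x : ℕ) < t) := by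
        ext c
        simp only [Finset.mem_filter, Finset.mem_insert]
        constructor
        · rintro ⟨hc, hlt⟩
          by_cases hceq : c = {j, T}
          · exact Or.inl hceq
          · refine Or.inr ⟨hc, fun x hx => ?_⟩
            have hlt' := hlt x hx
            rcases Nat.lt_succ_iff_lt_or_eq.mp hlt' with h | h
            · exact h
            · exfalso
              have hxT : x = T := Fin.ext h
              exact hceq (arc_unique a hc hjT hx (by simp [hxT]))
        · rintro (rfl | ⟨hc, hlt⟩)
          · refine ⟨hjT, fun x hx => ?_⟩
            have hj' : (j : ℕ) < t := Fin.lt_def.mp hj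
            have hTt : (T : ℕ) = t := rfl
            rcases Finset.mem_insert.mp hx with rfl | hx
            · omega
            · rcases Finset.mem_singleton.mp hx with rfl
              omega
          · exact ⟨hc, fun x hx => Nat.lt_succ_of_lt (hlt x hx)⟩
      rw [hstep, Finset.card_insert_of_notMem]
      simp only [Finset.mem_filter, not_and]
      intro _ h
      have hTt : (T : ℕ) = t := rfl
      have := h T (by simp)
      omega
    · congr 1
      ext c
      simp only [Finset.mem_filter, and_congr_right_iff]
      intro hc
      constructor
      · intro hlt x hx
        have hlt' := hlt x hx
        rcases Nat.lt_succ_iff_lt_or_eq.mp hlt' with h | h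
        · exact h
        · exfalso
          have hxT : x = T := Fin.ext h
          subst hxT
          obtain ⟨u, v, huv, rfl⟩ := arc_pair a hc
          have huv' : (u : ℕ) < (v : ℕ) := huv
          rcases Finset.mem_insert.mp hx with he | hx'
          · have hvlt : (v : ℕ) < t + 1 := hlt v (by simp)
            have hTt : (T : ℕ) = t := rfl
            have hTu : (T : ℕ) = (u : ℕ) := by rw [he]
            omega
          · rcases Finset.mem_singleton.mp hx' with rfl
            exact hM ⟨u, huv, hc⟩
      · intro hlt x hx
        exact Nat.lt_succ_of_lt (hlt x hx)
  simp only [ht, key]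
  push_cast
  split_ifs <;> ring

theorem isMax_of_ht_lt (a : HalfDiag n) (t : ℕ) (htn : t < n)
    (h : ht a (t + 1) < ht a t) : isMax a ⟨t, htn⟩ := by
  have := ht_step a t htn
  by_contra hM
  rw [if_neg hM] at this
  omega

theorem not_isMax_of_ht_lt (a : HalfDiag n) (t : ℕ) (htn : t < n)
    (h : ht a t < ht a (t + 1)) : ¬ isMax a ⟨t, htn⟩ := by
  intro hM
  have := ht_step a t htn
  rw [if_pos hM] at this
  omega

theorem inside_arc (a : HalfDiag n) {u v m : Fin n}
    (h : ({u, v} : Finset (Fin n)) ∈ a.arcs) (hu : u < m) (hv : m < v) :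
    ∃ s t : Fin n, s < t ∧ ({s, t} : Finset (Fin n)) ∈ a.arcs ∧ (m = s ∨ m = t) ∧
      u < s ∧ t < v := by
  have hcov : covered a.arcs m := by
    by_contra hc
    exact arc_through a h hu hv hc
  obtain ⟨c, hc, hmc⟩ := hcov
  obtain ⟨s, t, hst, rfl⟩ := arc_pair a hc
  have hcd : ({s, t} : Finset (Fin n)) ≠ {u, v} := by
    intro he
    rw [pair_eq_iff] at he
    rcases he with ⟨rfl, rfl⟩ | ⟨rfl, rfl⟩
    · rcases Finset.mem_insert.mp hmc with rfl | hm'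
      · exact absurd hu (lt_irrefl _)
      · rcases Finset.mem_singleton.mp hm' with rfl
        exact absurd hv (lt_irrefl _)
    · rcases Finset.mem_insert.mp hmc with rfl | hm'
      · exact absurd hv (lt_irrefl _)
      · rcases Finset.mem_singleton.mp hm' with rfl
        exact absurd hu (lt_irrefl _)
  have hsu : s ≠ u := fun he => hcd (arc_unique a hc h (x := s) (by simp)
    (by rw [he]; simp))
  have hsv' : s ≠ v := fun he => hcd (arc_unique a hc h (x := s) (by simp)
    (by rw [he]; simp))
  have htu : t ≠ u := fun he => hcd (arc_unique a hc h (x := t) (by simp)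
    (by rw [he]; simp))
  have htv : t ≠ v := fun he => hcd (arc_unique a hc h (x := t) (by simp)
    (by rw [he]; simp))
  rcases Finset.mem_insert.mp hmc with he | hm'
  · refine ⟨s, t, hst, hc, Or.inl he, he ▸ hu, ?_⟩
    by_contra hlt
    push_neg at hlt
    have hvt : v < t := lt_of_le_of_ne hlt (Ne.symm htv)
    exact arc_nc a h hc (he ▸ hu) (he ▸ hv) hvt
  · have he := Finset.mem_singleton.mp hm'
    refine ⟨s, t, hst, hc, Or.inr he, ?_, he ▸ hv⟩
    by_contra hlt
    push_neg at hlt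
    have hsu' : s < u := lt_of_le_of_ne hlt hsu
    exact arc_nc a hc h hsu' (he ▸ hu) (he ▸ hv)

theorem ht_arc (a : HalfDiag n) : ∀ k : ℕ, ∀ u v : Fin n, (v : ℕ) - (u : ℕ) = k →
    ({u, v} : Finset (Fin n)) ∈ a.arcs → u < v →
    (∀ m : ℕ, (u : ℕ) < m → m ≤ (v : ℕ) → ht a (u : ℕ) + 1 ≤ ht a m) ∧
      ht a ((v : ℕ) + 1) = ht a (u : ℕ) := by
  intro k
  induction k using Nat.strong_induction_on with
  | _ k IH =>
    intro u v hk harc huv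
    have huv' : (u : ℕ) < (v : ℕ) := huv
    have hvn : (v : ℕ) < n := v.isLt
    -- step at u is +1
    have hMu : ¬ isMax a u := by
      rintro ⟨j, hj, hjarc⟩
      have := arc_unique a hjarc harc (x := u) (by simp) (by simp)
      rw [pair_eq_iff] at this
      have hj' : (j : ℕ) < (u : ℕ) := hj
      rcases this with ⟨h1, h2⟩ | ⟨h1, h2⟩
      · have : (u : ℕ) = (v : ℕ) := congrArg Fin.val h2
        omega
      · have : (j : ℕ) = (v : ℕ) := congrArg Fin.val h1
        omega
    have hstep_u : ht a ((u : ℕ) + 1) = ht a (u : ℕ) + 1 := by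
      have := ht_step a (u : ℕ) (lt_trans huv' hvn)
      rw [if_neg (by simpa using hMu)] at this
      omega
    -- classification of points strictly inside the arc
    have classify : ∀ w : Fin n, u < w → w < v →
        (isMax a w → ∃ s : Fin n, u < s ∧ s < w ∧
          ({s, w} : Finset (Fin n)) ∈ a.arcs ∧ ht a ((w : ℕ) + 1) = ht a (s : ℕ)) ∧
        (¬ isMax a w → ∃ t' : Fin n, w < t' ∧ t' < v ∧
          ({w, t'} : Finset (Fin n)) ∈ a.arcs ∧ ht a ((t' : ℕ) + 1) = ht a (w : ℕ)) := by
      intro w huw hwv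
      obtain ⟨s, t, hst, hstarc, hw, hus, htv⟩ := inside_arc a harc huw hwv
      have hst' : (s : ℕ) < (t : ℕ) := hst
      have hus' : (u : ℕ) < (s : ℕ) := hus
      have htv' : (t : ℕ) < (v : ℕ) := htv
      have hIH := IH ((t : ℕ) - (s : ℕ)) (by omega) s t rfl hstarc hst
      constructor
      · intro hM
        rcases hw with he | he
        · -- w = s : w is the smaller endpoint, contradiction with isMax
          exfalso
          obtain ⟨j, hj, hjarc⟩ := hM
          have heq := arc_unique a hjarc hstarc (x := w) (by simp) (by rw [he]; simp)
          rw [pair_eq_iff] at heq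
          have hj' : (j : ℕ) < (w : ℕ) := hj
          have hws : (w : ℕ) = (s : ℕ) := congrArg Fin.val he
          rcases heq with ⟨h1, h2⟩ | ⟨h1, h2⟩
          · have : (w : ℕ) = (t : ℕ) := congrArg Fin.val h2
            omega
          · have : (j : ℕ) = (t : ℕ) := congrArg Fin.val h1
            omega
        · -- w = t
          refine ⟨s, hus, ?_, ?_, ?_⟩
          · rw [he]; exact hst
          · rw [he]; exact hstarc
          · have := hIH.2
            rw [he]
            exact this
      · intro hM
        rcases hw with he | he
        · refine ⟨t, ?_, htv, ?_, ?_⟩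
          · rw [he]; exact hst
          · rw [he]; exact hstarc
          · rw [he]; exact hIH.2
        · exfalso
          exact hM ⟨s, by rw [he]; exact hst, by rw [he]; exact hstarc⟩
    -- upward claim
    have up : ∀ m : ℕ, (u : ℕ) < m → m ≤ (v : ℕ) → ht a (u : ℕ) + 1 ≤ ht a m := by
      intro m
      induction m using Nat.strong_induction_on with
      | _ m ihm =>
        intro hum hmv
        have hm1 : m - 1 + 1 = m := by omega
        by_cases he : m = (u : ℕ) + 1
        · rw [he, hstep_u]
        · have hum' : (u : ℕ) + 1 < m := by omega
          obtain ⟨m', rfl⟩ : ∃ m', m = m' + 1 := ⟨m - 1, by omega⟩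
          have hm'n : m' < n := by omega
          have huw : u < (⟨m', hm'n⟩ : Fin n) := by simp [Fin.lt_def]; omega
          have hwv : (⟨m', hm'n⟩ : Fin n) < v := by simp [Fin.lt_def]; omega
          have hsm := ht_step a m' hm'n
          by_cases hM : isMax a ⟨m', hm'n⟩
          · obtain ⟨s, hus, hsw, hsarc, heq⟩ := (classify _ huw hwv).1 hM
            have hwval : ((⟨m', hm'n⟩ : Fin n) : ℕ) = m' := rfl
            rw [hwval] at heq
            rw [heq]
            have hsw' : (s : ℕ) < m' := hsw
            have hus' : (u : ℕ) < (s : ℕ) := hus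
            exact ihm (s : ℕ) (by omega) hus' (by omega)
          · rw [if_neg hM] at hsm
            by_cases hu1 : m' = (u : ℕ)
            · rw [hu1] at hsm ⊢; omega
            · have := ihm m' (by omega) (by omega) (by omega)
              omega
    -- downward claim
    have down : ∀ j : ℕ, ∀ m : ℕ, (v : ℕ) - m = j → (u : ℕ) < m → m ≤ (v : ℕ) →
        ht a ((v : ℕ) + 1) + 1 ≤ ht a m := by
      intro j
      induction j using Nat.strong_induction_on with
      | _ j ihj =>
        intro m hj hum hmv
        have hMv : isMax a v := ⟨u, huv, harc⟩
        have hsv := ht_step a (v : ℕ) hvn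
        rw [if_pos hMv] at hsv
        by_cases he : m = (v : ℕ)
        · rw [he]; omega
        · have hmv' : m < (v : ℕ) := by omega
          set w : Fin n := ⟨m, by omega⟩ with hw
          have huw : u < w := by simp [Fin.lt_def, hw]; omega
          have hwv : w < v := by simp [Fin.lt_def, hw]; omega
          have hwval : (w : ℕ) = m := rfl
          have hsm := ht_step a m (by omega)
          by_cases hM : isMax a w
          · rw [if_pos hM] at hsm
            have := ihj (v - (m + 1)) (by omega) (m + 1) (by omega) (by omega) (by omega)
            omega
          · obtain ⟨t', hwt, htv, htarc, heq⟩ := (classify w huw hwv).2 hM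
            rw [hwval] at heq
            have hwt' : m < (t' : ℕ) := hwt
            have htv' : (t' : ℕ) < (v : ℕ) := htv
            have := ihj ((v : ℕ) - ((t' : ℕ) + 1)) (by omega) ((t' : ℕ) + 1)
              (by omega) (by omega) (by omega)
            omega
    constructor
    · exact up
    · have hMv : isMax a v := ⟨u, huv, harc⟩
      have hsv := ht_step a (v : ℕ) hvn
      rw [if_pos hMv] at hsv
      have h1 := up (v : ℕ) huv' le_rfl
      have h2 := down ((v : ℕ) - ((u : ℕ) + 1)) ((u : ℕ) + 1) rfl (by omega) (by omega)
      omega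

theorem ht_arc' (a : HalfDiag n) {u v : Fin n}
    (harc : ({u, v} : Finset (Fin n)) ∈ a.arcs) (huv : u < v) :
    (∀ m : ℕ, (u : ℕ) < m → m ≤ (v : ℕ) → ht a (u : ℕ) + 1 ≤ ht a m) ∧
      ht a ((v : ℕ) + 1) = ht a (u : ℕ) :=
  ht_arc a ((v : ℕ) - (u : ℕ)) u v rfl harc huv

theorem arcs_subset_of_ht_eq (a b : HalfDiag n) (h : ∀ j ≤ n, ht a j = ht b j) :
    a.arcs ⊆ b.arcs := by
  intro c hc
  obtain ⟨u, v, huv, rfl⟩ := arc_pair a hc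
  have huv' : (u : ℕ) < (v : ℕ) := huv
  have hvn : (v : ℕ) < n := v.isLt
  have hMa : isMax a v := ⟨u, huv, hc⟩
  have hsa := ht_step a (v : ℕ) hvn
  rw [if_pos (by simpa using hMa)] at hsa
  have hsb := ht_step b (v : ℕ) hvn
  have hMb : isMax b ⟨(v : ℕ), hvn⟩ := by
    by_contra hM
    rw [if_neg hM] at hsb
    have e1 := h (v : ℕ) (by omega)
    have e2 := h ((v : ℕ) + 1) (by omega)
    omega
  obtain ⟨u', hu', harc'⟩ := hMb
  have hVv : (⟨(v : ℕ), hvn⟩ : Fin n) = v := rfl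
  rw [hVv] at harc' hu'
  have hu'' : (u' : ℕ) < (v : ℕ) := hu'
  have Ha := ht_arc' a hc huv
  have Hb := ht_arc' b harc' hu'
  have heq : u' = u := by
    by_contra hne
    rcases lt_or_gt_of_ne (fun he : (u : ℕ) = (u' : ℕ) => hne (Fin.ext he.symm))
      with hlt | hlt
    · -- u < u'
      have h1 := Ha.1 (u' : ℕ) hlt (by omega)
      have h2 := Hb.2
      have h3 := Ha.2
      have e1 := h (u' : ℕ) (by omega)
      have e2 := h ((v : ℕ) + 1) (by omega)
      have e3 := h (u : ℕ) (by omega)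
      omega
    · -- u' < u
      have h1 := Hb.1 (u : ℕ) hlt (by omega)
      have h2 := Hb.2
      have h3 := Ha.2
      have e1 := h (u : ℕ) (by omega)
      have e2 := h ((v : ℕ) + 1) (by omega)
      have e3 := h (u' : ℕ) (by omega)
      omega
  rwa [heq] at harc'

theorem eq_of_ht_eq (a b : HalfDiag n) (h : ∀ j ≤ n, ht a j = ht b j) : a = b := by
  apply HalfDiag.ext'
  apply Finset.Subset.antisymm
  · exact arcs_subset_of_ht_eq a b h
  · exact arcs_subset_of_ht_eq b a (fun j hj => (h j hj).symm)

/-- Build a `HalfDiag` from pair-form data. -/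
def mk' (A : Finset (Finset (Fin n)))
    (hpair : ∀ c ∈ A, ∃ u v : Fin n, u < v ∧ c = {u, v})
    (hdisj : ∀ a ∈ A, ∀ b ∈ A, a ≠ b → Disjoint a b)
    (hnc1 : ∀ u v s t : Fin n, ({u, v} : Finset (Fin n)) ∈ A →
      ({s, t} : Finset (Fin n)) ∈ A → u < s → s < v → v < t → False)
    (hnc2 : ∀ u v k : Fin n, ({u, v} : Finset (Fin n)) ∈ A → u < k → k < v →
      (∀ c ∈ A, k ∉ c) → False) : HalfDiag n where
  arcs := A
  two c hc := by
    obtain ⟨u, v, huv, rfl⟩ := hpair c hc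
    rw [Finset.card_insert_of_notMem (by simp [huv.ne]), Finset.card_singleton]
  disj := hdisj
  nc1 c hc e he i j k l hic hjc hke hle hik hkj hjl := by
    obtain ⟨u, v, huv, rfl⟩ := hpair c hc
    obtain ⟨s, t, hst, rfl⟩ := hpair e he
    simp only [Finset.mem_insert, Finset.mem_singleton] at hic hjc hke hle
    have h1 : (u : ℕ) < v := huv
    have h2 : (s : ℕ) < t := hst
    have h3 : (i : ℕ) < k := hik
    have h4 : (k : ℕ) < j := hkj
    have h5 : (j : ℕ) < l := hjl
    have hiu : (i : ℕ) = u ∨ (i : ℕ) = v := by rcases hic with rfl | rfl <;> simp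
    have hju : (j : ℕ) = u ∨ (j : ℕ) = v := by rcases hjc with rfl | rfl <;> simp
    have hks : (k : ℕ) = s ∨ (k : ℕ) = t := by rcases hke with rfl | rfl <;> simp
    have hls : (l : ℕ) = s ∨ (l : ℕ) = t := by rcases hle with rfl | rfl <;> simp
    have hiu' : i = u := Fin.ext (by omega)
    have hjv' : j = v := Fin.ext (by omega)
    have hks' : k = s := Fin.ext (by omega)
    have hlt' : l = t := Fin.ext (by omega)
    subst hiu' hjv' hks' hlt'
    exact hnc1 i j k l hc he hik hkj hjl
  nc2 c hc i j hic hjc k hk hik hkj := by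
    obtain ⟨u, v, huv, rfl⟩ := hpair c hc
    simp only [Finset.mem_insert, Finset.mem_singleton] at hic hjc
    have h1 : (u : ℕ) < v := huv
    have h3 : (i : ℕ) < k := hik
    have h4 : (k : ℕ) < j := hkj
    have hiu : (i : ℕ) = u ∨ (i : ℕ) = v := by rcases hic with rfl | rfl <;> simp
    have hju : (j : ℕ) = u ∨ (j : ℕ) = v := by rcases hjc with rfl | rfl <;> simp
    have hiu' : i = u := Fin.ext (by omega)
    have hjv' : j = v := Fin.ext (by omega)
    subst hiu' hjv'
    exact hnc2 i j k hc hik hkj hk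

/-- Indicator: `1` if all points of `e` lie strictly below `m`. -/
def ind (m : ℕ) (e : Finset (Fin n)) : ℤ :=
  if ∀ z : Fin n, z ∈ e → (z : ℕ) < m then 1 else 0

theorem card_filter_insert_int (A : Finset (Finset (Fin n))) (e : Finset (Fin n))
    (he : e ∉ A) (m : ℕ) :
    (((insert e A).filter fun c => ∀ z : Fin n, z ∈ c → (z : ℕ) < m).card : ℤ)
      = ind m e + ((A.filter fun c => ∀ z : Fin n, z ∈ c → (z : ℕ) < m).card : ℤ) := by
  classical
  rw [Finset.filter_insert]
  split_ifs with h
  · rw [Finset.card_insert_of_notMem (fun hmem => he (Finset.mem_of_mem_filter _ hmem))]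
    rw [ind, if_pos h]
    push_cast
    ring
  · rw [ind, if_neg h]
    ring

theorem ht_of_arcs_eq₂ {c b : HalfDiag n} {R : Finset (Finset (Fin n))}
    {e1 e2 f1 f2 : Finset (Fin n)}
    (hc : c.arcs = insert e1 (insert e2 R)) (hb : b.arcs = insert f1 (insert f2 R))
    (he1 : e1 ∉ insert e2 R) (he2 : e2 ∉ R)
    (hf1 : f1 ∉ insert f2 R) (hf2 : f2 ∉ R) (m : ℕ) :
    ht c m = ht b m + 2 * (ind m f1 + ind m f2 - ind m e1 - ind m e2) := by
  rw [ht, ht, hc, hb]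
  rw [card_filter_insert_int _ _ he1, card_filter_insert_int _ _ he2,
    card_filter_insert_int _ _ hf1, card_filter_insert_int _ _ hf2]
  ring

theorem ht_of_arcs_eq₁ {c b : HalfDiag n} {R : Finset (Finset (Fin n))}
    {e1 f1 : Finset (Fin n)}
    (hc : c.arcs = insert e1 R) (hb : b.arcs = insert f1 R)
    (he1 : e1 ∉ R) (hf1 : f1 ∉ R) (m : ℕ) :
    ht c m = ht b m + 2 * (ind m f1 - ind m e1) := by
  rw [ht, ht, hc, hb]
  rw [card_filter_insert_int _ _ he1, card_filter_insert_int _ _ hf1]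
  ring

theorem ind_pair {u v : Fin n} (huv : (u : ℕ) ≤ (v : ℕ)) (m : ℕ) :
    ind m ({u, v} : Finset (Fin n)) = if (v : ℕ) < m then 1 else 0 := by
  by_cases h : (v : ℕ) < m
  · rw [if_pos h, ind, if_pos]
    intro z hz
    rcases Finset.mem_insert.mp hz with rfl | hz
    · omega
    · rcases Finset.mem_singleton.mp hz with rfl
      omega
  · rw [if_neg h, ind, if_neg]
    intro hall
    exact h (hall v (by simp))

theorem Eact_eq_xi (q : ℂ) (b : HalfDiag n) (i : ℕ) (h1 : 1 ≤ i) (h2 : i < n)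
    (hno : ({⟨i - 1, by omega⟩, ⟨i, h2⟩} : Finset (Fin n)) ∉ b.arcs)
    (hcv : ¬(¬ covered b.arcs ⟨i - 1, by omega⟩ ∧ ¬ covered b.arcs ⟨i, h2⟩))
    (c : HalfDiag n) (hc : c.arcs = newArcs ⟨i - 1, by omega⟩ ⟨i, h2⟩ b.arcs) :
    Eact q i b = xi c := by
  have hex : ∃ e : HalfDiag n, e.arcs = newArcs ⟨i - 1, by omega⟩ ⟨i, h2⟩ b.arcs :=
    ⟨c, hc⟩
  unfold Eact
  rw [dif_pos (⟨h1, h2⟩ : 1 ≤ i ∧ i < n)]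
  rw [if_neg hno, if_neg hcv, dif_pos hex]
  congr 1
  apply HalfDiag.ext'
  rw [hex.choose_spec, hc]

theorem flt {u v : Fin n} (h : (u : ℕ) < (v : ℕ)) : u < v := h

theorem fne {u v : Fin n} (h : (u : ℕ) ≠ (v : ℕ)) : u ≠ v :=
  fun he => h (congrArg Fin.val he)

theorem mem_pair' {z u v : Fin n} (h : z ∈ ({u, v} : Finset (Fin n))) : z = u ∨ z = v := by
  simpa using h

theorem pair_ne_of_val {u v s t : Fin n}
    (h : ¬(((u : ℕ) = s ∧ (v : ℕ) = t) ∨ ((u : ℕ) = t ∧ (v : ℕ) = s))) :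
    ({u, v} : Finset (Fin n)) ≠ {s, t} := by
  intro he
  rw [pair_eq_iff] at he
  rcases he with ⟨rfl, rfl⟩ | ⟨rfl, rfl⟩ <;> simp at h

theorem case_nested (b : HalfDiag n) (x y j l : Fin n) (hxy : (y : ℕ) = (x : ℕ) + 1)
    (hA : ({j, x} : Finset (Fin n)) ∈ b.arcs) (hB : ({y, l} : Finset (Fin n)) ∈ b.arcs)
    (hj : (j : ℕ) < (x : ℕ)) (hl : (y : ℕ) < (l : ℕ)) :
    ∃ c : HalfDiag n, c.arcs = newArcs x y b.arcs ∧ c.arcs.card = b.arcs.card ∧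
      ∀ m : ℕ, ht c m = ht b m + (if m = (x : ℕ) + 1 then 2 else 0) := by
  classical
  set R := b.arcs.filter (fun c => x ∉ c ∧ y ∉ c) with hRdef
  have hRmem : ∀ e, e ∈ R ↔ e ∈ b.arcs ∧ x ∉ e ∧ y ∉ e := by
    intro e; simp [hRdef]
  have hxmem : ∀ e ∈ b.arcs, x ∈ e → e = {j, x} := fun e he hx =>
    arc_unique b he hA hx (by simp)
  have hymem : ∀ e ∈ b.arcs, y ∈ e → e = {y, l} := fun e he hy =>
    arc_unique b he hB hy (by simp)
  have hjmem : ∀ e ∈ b.arcs, j ∈ e → e = {j, x} := fun e he hz =>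
    arc_unique b he hA hz (by simp)
  have hlmem : ∀ e ∈ b.arcs, l ∈ e → e = {y, l} := fun e he hz =>
    arc_unique b he hB hz (by simp)
  have hAne : ({j, x} : Finset (Fin n)) ≠ {y, l} :=
    pair_ne_of_val (by omega)
  have hAR : ({j, x} : Finset (Fin n)) ∉ R := by
    intro h; exact ((hRmem _).mp h).2.1 (by simp)
  have hBR : ({y, l} : Finset (Fin n)) ∉ R := by
    intro h; exact ((hRmem _).mp h).2.2 (by simp)
  have hxyN : ({x, y} : Finset (Fin n)) ≠ {j, l} := pair_ne_of_val (by omega)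
  have hxyR : ({x, y} : Finset (Fin n)) ∉ R := by
    intro h; exact ((hRmem _).mp h).2.1 (by simp)
  have hNb : ({j, l} : Finset (Fin n)) ∉ b.arcs := by
    intro h
    have := hjmem _ h (by simp)
    rw [pair_eq_iff] at this
    rcases this with ⟨h1, h2⟩ | ⟨h1, h2⟩
    · have := congrArg Fin.val h2; omega
    · have := congrArg Fin.val h1; omega
  have hNR : ({j, l} : Finset (Fin n)) ∉ R := fun h => hNb ((hRmem _).mp h).1
  have barcs : b.arcs = insert {j, x} (insert {y, l} R) := by
    ext e
    simp only [Finset.mem_insert]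
    constructor
    · intro he
      by_cases hx : x ∈ e
      · exact Or.inl (hxmem e he hx)
      · by_cases hy : y ∈ e
        · exact Or.inr (Or.inl (hymem e he hy))
        · exact Or.inr (Or.inr ((hRmem e).mpr ⟨he, hx, hy⟩))
    · rintro (rfl | rfl | he)
      · exact hA
      · exact hB
      · exact ((hRmem e).mp he).1
  set D : Finset (Finset (Fin n)) := insert {x, y} (insert {j, l} R) with hDdef
  have memD : ∀ e, e ∈ D ↔ e = {x, y} ∨ e = {j, l} ∨ e ∈ R := by
    intro e; simp [hDdef]
  -- the new half-diagram
  have hpair : ∀ c ∈ D, ∃ u v : Fin n, u < v ∧ c = {u, v} := by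
    intro c hc
    rcases (memD c).mp hc with rfl | rfl | hc'
    · exact ⟨x, y, flt (by omega), rfl⟩
    · exact ⟨j, l, flt (by omega), rfl⟩
    · exact arc_pair b ((hRmem _).mp hc').1
  have hdisj : ∀ c ∈ D, ∀ e ∈ D, c ≠ e → Disjoint c e := by
    intro c hc e he hne
    rw [Finset.disjoint_left]
    intro z hzc hze
    rcases (memD c).mp hc with rfl | rfl | hc' <;>
      rcases (memD e).mp he with rfl | rfl | he'
    · exact hne rfl
    · rcases mem_pair' hzc with rfl | rfl <;> rcases mem_pair' hze with h | h <;>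
        (have := congrArg Fin.val h; omega)
    · rcases mem_pair' hzc with rfl | rfl
      · exact ((hRmem _).mp he').2.1 hze
      · exact ((hRmem _).mp he').2.2 hze
    · rcases mem_pair' hzc with rfl | rfl <;> rcases mem_pair' hze with h | h <;>
        (have := congrArg Fin.val h; omega)
    · exact hne rfl
    · rcases mem_pair' hzc with rfl | rfl
      · have := hjmem _ ((hRmem _).mp he').1 hze
        subst this
        exact ((hRmem _).mp he').2.1 (by simp)
      · have := hlmem _ ((hRmem _).mp he').1 hze
        subst this
        exact ((hRmem _).mp he').2.2 (by simp)
    · rcases mem_pair' hze with rfl | rfl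
      · exact ((hRmem _).mp hc').2.1 hzc
      · exact ((hRmem _).mp hc').2.2 hzc
    · rcases mem_pair' hze with rfl | rfl
      · have := hjmem _ ((hRmem _).mp hc').1 hzc
        subst this
        exact ((hRmem _).mp hc').2.1 (by simp)
      · have := hlmem _ ((hRmem _).mp hc').1 hzc
        subst this
        exact ((hRmem _).mp hc').2.2 (by simp)
    · exact Finset.disjoint_left.mp
        (b.disj c ((hRmem _).mp hc').1 e ((hRmem _).mp he').1 hne) hzc hze
  have memDpair : ∀ u v : Fin n, ({u, v} : Finset (Fin n)) ∈ D →
      ((u = x ∧ v = y) ∨ (u = y ∧ v = x)) ∨ ((u = j ∧ v = l) ∨ (u = l ∧ v = j)) ∨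
        (({u, v} : Finset (Fin n)) ∈ b.arcs ∧ u ≠ x ∧ u ≠ y ∧ v ≠ x ∧ v ≠ y) := by
    intro u v h
    rcases (memD _).mp h with h' | h' | h'
    · rw [pair_eq_iff] at h'; exact Or.inl h'
    · rw [pair_eq_iff] at h'; exact Or.inr (Or.inl h')
    · obtain ⟨hmem, hx, hy⟩ := (hRmem _).mp h'
      simp only [Finset.mem_insert, Finset.mem_singleton, not_or] at hx hy
      exact Or.inr (Or.inr ⟨hmem, fun h => hx.1 h.symm, fun h => hy.1 h.symm,
        fun h => hx.2 h.symm, fun h => hy.2 h.symm⟩)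
  have hnc1 : ∀ u v s t : Fin n, ({u, v} : Finset (Fin n)) ∈ D →
      ({s, t} : Finset (Fin n)) ∈ D → u < s → s < v → v < t → False := by
    intro u v s t huv hst l1 l2 l3
    have l1' : (u : ℕ) < s := l1
    have l2' : (s : ℕ) < v := l2
    have l3' : (v : ℕ) < t := l3
    rcases memDpair u v huv with (⟨rfl, rfl⟩ | ⟨rfl, rfl⟩) | (⟨rfl, rfl⟩ | ⟨rfl, rfl⟩) |
      ⟨huv', hne1, hne2, hne3, hne4⟩
    · omega
    · omega
    · -- u = j, v = l
      rcases memDpair s t hst with (⟨rfl, rfl⟩ | ⟨rfl, rfl⟩) | (⟨rfl, rfl⟩ | ⟨rfl, rfl⟩) |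
        ⟨hst', hne1, hne2, hne3, hne4⟩
      · omega
      · omega
      · omega
      · omega
      · have hsx : (s : ℕ) ≠ x := fun h => hne1 (Fin.ext h)
        have hsy : (s : ℕ) ≠ y := fun h => hne2 (Fin.ext h)
        rcases lt_or_gt_of_ne hsx with h | h
        · exact arc_nc b hA hst' (flt (by omega)) (flt (by omega)) (flt (by omega))
        · exact arc_nc b hB hst' (flt (by omega)) (flt (by omega)) (flt (by omega))
    · omega
    · -- {u,v} ∈ b.arcs, untouched
      rcases memDpair s t hst with (⟨rfl, rfl⟩ | ⟨rfl, rfl⟩) | (⟨rfl, rfl⟩ | ⟨rfl, rfl⟩) |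
        ⟨hst', hne1', hne2', hne3', hne4'⟩
      · omega
      · omega
      · -- s = j, t = l
        have hvx : (v : ℕ) ≠ x := fun h => hne3 (Fin.ext h)
        have hvy : (v : ℕ) ≠ y := fun h => hne4 (Fin.ext h)
        rcases lt_or_gt_of_ne hvx with h | h
        · exact arc_nc b huv' hA (flt (by omega)) (flt (by omega)) (flt (by omega))
        · exact arc_nc b huv' hB (flt (by omega)) (flt (by omega)) (flt (by omega))
      · omega
      · exact arc_nc b huv' hst' l1 l2 l3
  have hnc2 : ∀ u v k : Fin n, ({u, v} : Finset (Fin n)) ∈ D → u < k → k < v →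
      (∀ c ∈ D, k ∉ c) → False := by
    intro u v k huv l1 l2 hk
    have l1' : (u : ℕ) < k := l1
    have l2' : (k : ℕ) < v := l2
    have hkx : k ≠ x := fun h => hk _ ((memD _).mpr (Or.inl rfl)) (by rw [h]; simp)
    have hky : k ≠ y := fun h => hk _ ((memD _).mpr (Or.inl rfl)) (by rw [h]; simp)
    have hkj : k ≠ j := fun h => hk _ ((memD _).mpr (Or.inr (Or.inl rfl))) (by rw [h]; simp)
    have hkl : k ≠ l := fun h => hk _ ((memD _).mpr (Or.inr (Or.inl rfl))) (by rw [h]; simp)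
    have hkb : ¬ covered b.arcs k := by
      rintro ⟨e, he, hke⟩
      by_cases hx : x ∈ e
      · have := hxmem e he hx
        subst this
        rcases mem_pair' hke with rfl | rfl
        · exact hkj rfl
        · exact hkx rfl
      · by_cases hy : y ∈ e
        · have := hymem e he hy
          subst this
          rcases mem_pair' hke with rfl | rfl
          · exact hky rfl
          · exact hkl rfl
        · exact hk e ((memD _).mpr (Or.inr (Or.inr ((hRmem e).mpr ⟨he, hx, hy⟩)))) hke
    have hkx' : (k : ℕ) ≠ x := fun h => hkx (Fin.ext h)
    have hky' : (k : ℕ) ≠ y := fun h => hky (Fin.ext h)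
    rcases memDpair u v huv with (⟨rfl, rfl⟩ | ⟨rfl, rfl⟩) | (⟨rfl, rfl⟩ | ⟨rfl, rfl⟩) |
      ⟨huv', hne1, hne2, hne3, hne4⟩
    · omega
    · omega
    · rcases lt_or_gt_of_ne hkx' with h | h
      · exact arc_through b hA (flt (by omega)) (flt (by omega)) hkb
      · exact arc_through b hB (flt (by omega)) (flt (by omega)) hkb
    · omega
    · exact arc_through b huv' l1 l2 hkb
  refine ⟨mk' D hpair hdisj hnc1 hnc2, ?_, ?_, ?_⟩
  · -- arcs = newArcs
    show D = newArcs x y b.arcs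
    have hT : b.arcs.filter (fun c => x ∈ c ∨ y ∈ c)
        = {({j, x} : Finset (Fin n)), {y, l}} := by
      ext e
      simp only [Finset.mem_filter, Finset.mem_insert, Finset.mem_singleton]
      constructor
      · rintro ⟨he, hx | hy⟩
        · exact Or.inl (hxmem e he hx)
        · exact Or.inr (hymem e he hy)
      · rintro (rfl | rfl)
        · exact ⟨hA, Or.inl (by simp)⟩
        · exact ⟨hB, Or.inr (by simp)⟩
    have hNA : newArcs x y b.arcs = insert {x, y} (R ∪
        (if ((((b.arcs.filter fun c => x ∈ c ∨ y ∈ c).biUnion id) \ {x, y}).card = 2)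
          then {((b.arcs.filter fun c => x ∈ c ∨ y ∈ c).biUnion id) \ {x, y}}
          else ∅)) := rfl
    have hP : ((b.arcs.filter fun c => x ∈ c ∨ y ∈ c).biUnion id) \ {x, y}
        = ({j, l} : Finset (Fin n)) := by
      rw [hT, Finset.biUnion_insert, Finset.singleton_biUnion]
      ext z
      simp only [Finset.mem_sdiff, Finset.mem_union, Finset.mem_insert,
        Finset.mem_singleton, id_eq, not_or]
      constructor
      · rintro ⟨(rfl | rfl) | (rfl | rfl), hz1, hz2⟩
        · exact Or.inl rfl
        · exact absurd rfl hz1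
        · exact absurd rfl hz2
        · exact Or.inr rfl
      · rintro (rfl | rfl)
        · exact ⟨Or.inl (Or.inl rfl), fne (by omega), fne (by omega)⟩
        · exact ⟨Or.inr (Or.inr rfl), fne (by omega), fne (by omega)⟩
    rw [hNA, hP]
    rw [if_pos (Finset.card_pair (fne (show (j:ℕ) ≠ l by omega)))]
    rw [Finset.union_comm, ← Finset.insert_eq]
  · -- cardinality
    show D.card = b.arcs.card
    rw [hDdef, barcs]
    rw [Finset.card_insert_of_notMem (by
      simp only [Finset.mem_insert, not_or]; exact ⟨hxyN, hxyR⟩)]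
    rw [Finset.card_insert_of_notMem hNR]
    rw [Finset.card_insert_of_notMem (by
      simp only [Finset.mem_insert, not_or]; exact ⟨hAne, hAR⟩)]
    rw [Finset.card_insert_of_notMem hBR]
  · -- heights
    intro m
    have hh := ht_of_arcs_eq₂ (c := mk' D hpair hdisj hnc1 hnc2) (b := b)
      (R := R) (e1 := {x, y}) (e2 := {j, l}) (f1 := {j, x}) (f2 := {y, l})
      (by show D = _; rw [hDdef]) barcs
      (by simp only [Finset.mem_insert, not_or]; exact ⟨hxyN, hxyR⟩) hNR
      (by simp only [Finset.mem_insert, not_or]; exact ⟨hAne, hAR⟩) hBR m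
    rw [hh, ind_pair (by omega), ind_pair (by omega), ind_pair (by omega),
      ind_pair (by omega)]
    split_ifs <;> omega

theorem case_mm (b : HalfDiag n) (x y j l : Fin n) (hxy : (y : ℕ) = (x : ℕ) + 1)
    (hA : ({j, x} : Finset (Fin n)) ∈ b.arcs) (hB : ({l, y} : Finset (Fin n)) ∈ b.arcs)
    (hj : (j : ℕ) < (x : ℕ)) (hl : (l : ℕ) < (j : ℕ)) :
    ∃ c : HalfDiag n, c.arcs = newArcs x y b.arcs ∧ c.arcs.card = b.arcs.card ∧
      (∀ m : ℕ, ht c m ≤ ht b m) ∧ ht c ((x : ℕ) + 1) = ht b ((x : ℕ) + 1) := by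
  classical
  set R := b.arcs.filter (fun c => x ∉ c ∧ y ∉ c) with hRdef
  have hRmem : ∀ e, e ∈ R ↔ e ∈ b.arcs ∧ x ∉ e ∧ y ∉ e := by
    intro e; simp [hRdef]
  have hxmem : ∀ e ∈ b.arcs, x ∈ e → e = {j, x} := fun e he hx =>
    arc_unique b he hA hx (by simp)
  have hymem : ∀ e ∈ b.arcs, y ∈ e → e = {l, y} := fun e he hy =>
    arc_unique b he hB hy (by simp)
  have hjmem : ∀ e ∈ b.arcs, j ∈ e → e = {j, x} := fun e he hz =>
    arc_unique b he hA hz (by simp)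
  have hlmem : ∀ e ∈ b.arcs, l ∈ e → e = {l, y} := fun e he hz =>
    arc_unique b he hB hz (by simp)
  have hAne : ({j, x} : Finset (Fin n)) ≠ {l, y} := pair_ne_of_val (by omega)
  have hAR : ({j, x} : Finset (Fin n)) ∉ R := by
    intro h; exact ((hRmem _).mp h).2.1 (by simp)
  have hBR : ({l, y} : Finset (Fin n)) ∉ R := by
    intro h; exact ((hRmem _).mp h).2.2 (by simp)
  have hxyN : ({x, y} : Finset (Fin n)) ≠ {l, j} := pair_ne_of_val (by omega)
  have hxyR : ({x, y} : Finset (Fin n)) ∉ R := by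
    intro h; exact ((hRmem _).mp h).2.1 (by simp)
  have hNb : ({l, j} : Finset (Fin n)) ∉ b.arcs := by
    intro h
    have := hjmem _ h (by simp)
    rw [pair_eq_iff] at this
    rcases this with ⟨h1, h2⟩ | ⟨h1, h2⟩
    · have := congrArg Fin.val h1; omega
    · have := congrArg Fin.val h2; omega
  have hNR : ({l, j} : Finset (Fin n)) ∉ R := fun h => hNb ((hRmem _).mp h).1
  have barcs : b.arcs = insert {j, x} (insert {l, y} R) := by
    ext e
    simp only [Finset.mem_insert]
    constructor
    · intro he
      by_cases hx : x ∈ e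
      · exact Or.inl (hxmem e he hx)
      · by_cases hy : y ∈ e
        · exact Or.inr (Or.inl (hymem e he hy))
        · exact Or.inr (Or.inr ((hRmem e).mpr ⟨he, hx, hy⟩))
    · rintro (rfl | rfl | he)
      · exact hA
      · exact hB
      · exact ((hRmem e).mp he).1
  set D : Finset (Finset (Fin n)) := insert {x, y} (insert {l, j} R) with hDdef
  have memD : ∀ e, e ∈ D ↔ e = {x, y} ∨ e = {l, j} ∨ e ∈ R := by
    intro e; simp [hDdef]
  have hpair : ∀ c ∈ D, ∃ u v : Fin n, u < v ∧ c = {u, v} := by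
    intro c hc
    rcases (memD c).mp hc with rfl | rfl | hc'
    · exact ⟨x, y, flt (by omega), rfl⟩
    · exact ⟨l, j, flt (by omega), rfl⟩
    · exact arc_pair b ((hRmem _).mp hc').1
  have hdisj : ∀ c ∈ D, ∀ e ∈ D, c ≠ e → Disjoint c e := by
    intro c hc e he hne
    rw [Finset.disjoint_left]
    intro z hzc hze
    rcases (memD c).mp hc with rfl | rfl | hc' <;>
      rcases (memD e).mp he with rfl | rfl | he'
    · exact hne rfl
    · rcases mem_pair' hzc with rfl | rfl <;> rcases mem_pair' hze with h | h <;>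
        (have := congrArg Fin.val h; omega)
    · rcases mem_pair' hzc with rfl | rfl
      · exact ((hRmem _).mp he').2.1 hze
      · exact ((hRmem _).mp he').2.2 hze
    · rcases mem_pair' hzc with rfl | rfl <;> rcases mem_pair' hze with h | h <;>
        (have := congrArg Fin.val h; omega)
    · exact hne rfl
    · rcases mem_pair' hzc with rfl | rfl
      · have := hlmem _ ((hRmem _).mp he').1 hze
        subst this
        exact ((hRmem _).mp he').2.2 (by simp)
      · have := hjmem _ ((hRmem _).mp he').1 hze
        subst this
        exact ((hRmem _).mp he').2.1 (by simp)
    · rcases mem_pair' hze with rfl | rfl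
      · exact ((hRmem _).mp hc').2.1 hzc
      · exact ((hRmem _).mp hc').2.2 hzc
    · rcases mem_pair' hze with rfl | rfl
      · have := hlmem _ ((hRmem _).mp hc').1 hzc
        subst this
        exact ((hRmem _).mp hc').2.2 (by simp)
      · have := hjmem _ ((hRmem _).mp hc').1 hzc
        subst this
        exact ((hRmem _).mp hc').2.1 (by simp)
    · exact Finset.disjoint_left.mp
        (b.disj c ((hRmem _).mp hc').1 e ((hRmem _).mp he').1 hne) hzc hze
  have memDpair : ∀ u v : Fin n, ({u, v} : Finset (Fin n)) ∈ D →
      ((u = x ∧ v = y) ∨ (u = y ∧ v = x)) ∨ ((u = l ∧ v = j) ∨ (u = j ∧ v = l)) ∨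
        (({u, v} : Finset (Fin n)) ∈ b.arcs ∧ u ≠ x ∧ u ≠ y ∧ v ≠ x ∧ v ≠ y) := by
    intro u v h
    rcases (memD _).mp h with h' | h' | h'
    · rw [pair_eq_iff] at h'; exact Or.inl h'
    · rw [pair_eq_iff] at h'; exact Or.inr (Or.inl h')
    · obtain ⟨hmem, hx, hy⟩ := (hRmem _).mp h'
      simp only [Finset.mem_insert, Finset.mem_singleton, not_or] at hx hy
      exact Or.inr (Or.inr ⟨hmem, fun h => hx.1 h.symm, fun h => hy.1 h.symm,
        fun h => hx.2 h.symm, fun h => hy.2 h.symm⟩)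
  have hnc1 : ∀ u v s t : Fin n, ({u, v} : Finset (Fin n)) ∈ D →
      ({s, t} : Finset (Fin n)) ∈ D → u < s → s < v → v < t → False := by
    intro u v s t huv hst l1 l2 l3
    have l1' : (u : ℕ) < s := l1
    have l2' : (s : ℕ) < v := l2
    have l3' : (v : ℕ) < t := l3
    rcases memDpair u v huv with (⟨rfl, rfl⟩ | ⟨rfl, rfl⟩) | (⟨rfl, rfl⟩ | ⟨rfl, rfl⟩) |
      ⟨huv', hne1, hne2, hne3, hne4⟩
    · omega
    · omega
    · -- u = l, v = j
      rcases memDpair s t hst with (⟨rfl, rfl⟩ | ⟨rfl, rfl⟩) | (⟨rfl, rfl⟩ | ⟨rfl, rfl⟩) |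
        ⟨hst', hne1, hne2, hne3, hne4⟩
      · omega
      · omega
      · omega
      · omega
      · have htx : (t : ℕ) ≠ x := fun h => hne3 (Fin.ext h)
        have hty : (t : ℕ) ≠ y := fun h => hne4 (Fin.ext h)
        rcases lt_or_gt_of_ne htx with h | h
        · exact arc_nc b hst' hA (flt (by omega)) (flt (by omega)) (flt (by omega))
        · exact arc_nc b hB hst' (flt (by omega)) (flt (by omega)) (flt (by omega))
    · omega
    · rcases memDpair s t hst with (⟨rfl, rfl⟩ | ⟨rfl, rfl⟩) | (⟨rfl, rfl⟩ | ⟨rfl, rfl⟩) |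
        ⟨hst', hne1', hne2', hne3', hne4'⟩
      · omega
      · omega
      · -- s = l, t = j
        exact arc_nc b huv' hB (flt (by omega)) (flt (by omega)) (flt (by omega))
      · omega
      · exact arc_nc b huv' hst' l1 l2 l3
  have hnc2 : ∀ u v k : Fin n, ({u, v} : Finset (Fin n)) ∈ D → u < k → k < v →
      (∀ c ∈ D, k ∉ c) → False := by
    intro u v k huv l1 l2 hk
    have l1' : (u : ℕ) < k := l1
    have l2' : (k : ℕ) < v := l2
    have hkx : k ≠ x := fun h => hk _ ((memD _).mpr (Or.inl rfl)) (by rw [h]; simp)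
    have hky : k ≠ y := fun h => hk _ ((memD _).mpr (Or.inl rfl)) (by rw [h]; simp)
    have hkj : k ≠ j := fun h => hk _ ((memD _).mpr (Or.inr (Or.inl rfl))) (by rw [h]; simp)
    have hkl : k ≠ l := fun h => hk _ ((memD _).mpr (Or.inr (Or.inl rfl))) (by rw [h]; simp)
    have hkb : ¬ covered b.arcs k := by
      rintro ⟨e, he, hke⟩
      by_cases hx : x ∈ e
      · have := hxmem e he hx
        subst this
        rcases mem_pair' hke with rfl | rfl
        · exact hkj rfl
        · exact hkx rfl
      · by_cases hy : y ∈ e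
        · have := hymem e he hy
          subst this
          rcases mem_pair' hke with rfl | rfl
          · exact hkl rfl
          · exact hky rfl
        · exact hk e ((memD _).mpr (Or.inr (Or.inr ((hRmem e).mpr ⟨he, hx, hy⟩)))) hke
    rcases memDpair u v huv with (⟨rfl, rfl⟩ | ⟨rfl, rfl⟩) | (⟨rfl, rfl⟩ | ⟨rfl, rfl⟩) |
      ⟨huv', hne1, hne2, hne3, hne4⟩
    · omega
    · omega
    · exact arc_through b hB (flt (by omega)) (flt (by omega)) hkb
    · omega
    · exact arc_through b huv' l1 l2 hkb
  refine ⟨mk' D hpair hdisj hnc1 hnc2, ?_, ?_, ?_, ?_⟩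
  · show D = newArcs x y b.arcs
    have hT : b.arcs.filter (fun c => x ∈ c ∨ y ∈ c)
        = {({j, x} : Finset (Fin n)), {l, y}} := by
      ext e
      simp only [Finset.mem_filter, Finset.mem_insert, Finset.mem_singleton]
      constructor
      · rintro ⟨he, hx | hy⟩
        · exact Or.inl (hxmem e he hx)
        · exact Or.inr (hymem e he hy)
      · rintro (rfl | rfl)
        · exact ⟨hA, Or.inl (by simp)⟩
        · exact ⟨hB, Or.inr (by simp)⟩
    have hNA : newArcs x y b.arcs = insert {x, y} (R ∪
        (if ((((b.arcs.filter fun c => x ∈ c ∨ y ∈ c).biUnion id) \ {x, y}).card = 2)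
          then {((b.arcs.filter fun c => x ∈ c ∨ y ∈ c).biUnion id) \ {x, y}}
          else ∅)) := rfl
    have hP : ((b.arcs.filter fun c => x ∈ c ∨ y ∈ c).biUnion id) \ {x, y}
        = ({l, j} : Finset (Fin n)) := by
      rw [hT, Finset.biUnion_insert, Finset.singleton_biUnion]
      ext z
      simp only [Finset.mem_sdiff, Finset.mem_union, Finset.mem_insert,
        Finset.mem_singleton, id_eq, not_or]
      constructor
      · rintro ⟨(rfl | rfl) | (rfl | rfl), hz1, hz2⟩
        · exact Or.inr rfl
        · exact absurd rfl hz1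
        · exact Or.inl rfl
        · exact absurd rfl hz2
      · rintro (rfl | rfl)
        · exact ⟨Or.inr (Or.inl rfl), fne (by omega), fne (by omega)⟩
        · exact ⟨Or.inl (Or.inl rfl), fne (by omega), fne (by omega)⟩
    rw [hNA, hP]
    rw [if_pos (Finset.card_pair (fne (show (l : ℕ) ≠ j by omega)))]
    rw [Finset.union_comm, ← Finset.insert_eq]
  · show D.card = b.arcs.card
    rw [hDdef, barcs]
    rw [Finset.card_insert_of_notMem (by
      simp only [Finset.mem_insert, not_or]; exact ⟨hxyN, hxyR⟩)]
    rw [Finset.card_insert_of_notMem hNR]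
    rw [Finset.card_insert_of_notMem (by
      simp only [Finset.mem_insert, not_or]; exact ⟨hAne, hAR⟩)]
    rw [Finset.card_insert_of_notMem hBR]
  all_goals {
    have hh := fun m => ht_of_arcs_eq₂ (c := mk' D hpair hdisj hnc1 hnc2) (b := b)
      (R := R) (e1 := {x, y}) (e2 := {l, j}) (f1 := {j, x}) (f2 := {l, y})
      (by show D = _; rw [hDdef]) barcs
      (by simp only [Finset.mem_insert, not_or]; exact ⟨hxyN, hxyR⟩) hNR
      (by simp only [Finset.mem_insert, not_or]; exact ⟨hAne, hAR⟩) hBR m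
    first
      | (intro m
         have := hh m
         rw [ind_pair (by omega), ind_pair (by omega), ind_pair (by omega),
           ind_pair (by omega)] at this
         rw [this]
         split_ifs <;> omega)
      | (have := hh ((x : ℕ) + 1)
         rw [ind_pair (by omega), ind_pair (by omega), ind_pair (by omega),
           ind_pair (by omega)] at this
         rw [this]
         split_ifs <;> omega)
  }

theorem case_pp (b : HalfDiag n) (x y j l : Fin n) (hxy : (y : ℕ) = (x : ℕ) + 1)
    (hA : ({x, j} : Finset (Fin n)) ∈ b.arcs) (hB : ({y, l} : Finset (Fin n)) ∈ b.arcs)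
    (hj : (l : ℕ) < (j : ℕ)) (hl : (y : ℕ) < (l : ℕ)) :
    ∃ c : HalfDiag n, c.arcs = newArcs x y b.arcs ∧ c.arcs.card = b.arcs.card ∧
      (∀ m : ℕ, ht c m ≤ ht b m) ∧ ht c ((x : ℕ) + 1) = ht b ((x : ℕ) + 1) := by
  classical
  set R := b.arcs.filter (fun c => x ∉ c ∧ y ∉ c) with hRdef
  have hRmem : ∀ e, e ∈ R ↔ e ∈ b.arcs ∧ x ∉ e ∧ y ∉ e := by
    intro e; simp [hRdef]
  have hxmem : ∀ e ∈ b.arcs, x ∈ e → e = {x, j} := fun e he hx =>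
    arc_unique b he hA hx (by simp)
  have hymem : ∀ e ∈ b.arcs, y ∈ e → e = {y, l} := fun e he hy =>
    arc_unique b he hB hy (by simp)
  have hjmem : ∀ e ∈ b.arcs, j ∈ e → e = {x, j} := fun e he hz =>
    arc_unique b he hA hz (by simp)
  have hlmem : ∀ e ∈ b.arcs, l ∈ e → e = {y, l} := fun e he hz =>
    arc_unique b he hB hz (by simp)
  have hAne : ({x, j} : Finset (Fin n)) ≠ {y, l} := pair_ne_of_val (by omega)
  have hAR : ({x, j} : Finset (Fin n)) ∉ R := by
    intro h; exact ((hRmem _).mp h).2.1 (by simp)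
  have hBR : ({y, l} : Finset (Fin n)) ∉ R := by
    intro h; exact ((hRmem _).mp h).2.2 (by simp)
  have hxyN : ({x, y} : Finset (Fin n)) ≠ {l, j} := pair_ne_of_val (by omega)
  have hxyR : ({x, y} : Finset (Fin n)) ∉ R := by
    intro h; exact ((hRmem _).mp h).2.1 (by simp)
  have hNb : ({l, j} : Finset (Fin n)) ∉ b.arcs := by
    intro h
    have := hjmem _ h (by simp)
    rw [pair_eq_iff] at this
    rcases this with ⟨h1, h2⟩ | ⟨h1, h2⟩
    · have := congrArg Fin.val h1; omega
    · have := congrArg Fin.val h2; omega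
  have hNR : ({l, j} : Finset (Fin n)) ∉ R := fun h => hNb ((hRmem _).mp h).1
  have barcs : b.arcs = insert {x, j} (insert {y, l} R) := by
    ext e
    simp only [Finset.mem_insert]
    constructor
    · intro he
      by_cases hx : x ∈ e
      · exact Or.inl (hxmem e he hx)
      · by_cases hy : y ∈ e
        · exact Or.inr (Or.inl (hymem e he hy))
        · exact Or.inr (Or.inr ((hRmem e).mpr ⟨he, hx, hy⟩))
    · rintro (rfl | rfl | he)
      · exact hA
      · exact hB
      · exact ((hRmem e).mp he).1
  set D : Finset (Finset (Fin n)) := insert {x, y} (insert {l, j} R) with hDdef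
  have memD : ∀ e, e ∈ D ↔ e = {x, y} ∨ e = {l, j} ∨ e ∈ R := by
    intro e; simp [hDdef]
  have hpair : ∀ c ∈ D, ∃ u v : Fin n, u < v ∧ c = {u, v} := by
    intro c hc
    rcases (memD c).mp hc with rfl | rfl | hc'
    · exact ⟨x, y, flt (by omega), rfl⟩
    · exact ⟨l, j, flt (by omega), rfl⟩
    · exact arc_pair b ((hRmem _).mp hc').1
  have hdisj : ∀ c ∈ D, ∀ e ∈ D, c ≠ e → Disjoint c e := by
    intro c hc e he hne
    rw [Finset.disjoint_left]
    intro z hzc hze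
    rcases (memD c).mp hc with rfl | rfl | hc' <;>
      rcases (memD e).mp he with rfl | rfl | he'
    · exact hne rfl
    · rcases mem_pair' hzc with rfl | rfl <;> rcases mem_pair' hze with h | h <;>
        (have := congrArg Fin.val h; omega)
    · rcases mem_pair' hzc with rfl | rfl
      · exact ((hRmem _).mp he').2.1 hze
      · exact ((hRmem _).mp he').2.2 hze
    · rcases mem_pair' hzc with rfl | rfl <;> rcases mem_pair' hze with h | h <;>
        (have := congrArg Fin.val h; omega)
    · exact hne rfl
    · rcases mem_pair' hzc with rfl | rfl
      · have := hlmem _ ((hRmem _).mp he').1 hze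
        subst this
        exact ((hRmem _).mp he').2.2 (by simp)
      · have := hjmem _ ((hRmem _).mp he').1 hze
        subst this
        exact ((hRmem _).mp he').2.1 (by simp)
    · rcases mem_pair' hze with rfl | rfl
      · exact ((hRmem _).mp hc').2.1 hzc
      · exact ((hRmem _).mp hc').2.2 hzc
    · rcases mem_pair' hze with rfl | rfl
      · have := hlmem _ ((hRmem _).mp hc').1 hzc
        subst this
        exact ((hRmem _).mp hc').2.2 (by simp)
      · have := hjmem _ ((hRmem _).mp hc').1 hzc
        subst this
        exact ((hRmem _).mp hc').2.1 (by simp)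
    · exact Finset.disjoint_left.mp
        (b.disj c ((hRmem _).mp hc').1 e ((hRmem _).mp he').1 hne) hzc hze
  have memDpair : ∀ u v : Fin n, ({u, v} : Finset (Fin n)) ∈ D →
      ((u = x ∧ v = y) ∨ (u = y ∧ v = x)) ∨ ((u = l ∧ v = j) ∨ (u = j ∧ v = l)) ∨
        (({u, v} : Finset (Fin n)) ∈ b.arcs ∧ u ≠ x ∧ u ≠ y ∧ v ≠ x ∧ v ≠ y) := by
    intro u v h
    rcases (memD _).mp h with h' | h' | h'
    · rw [pair_eq_iff] at h'; exact Or.inl h'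
    · rw [pair_eq_iff] at h'; exact Or.inr (Or.inl h')
    · obtain ⟨hmem, hx, hy⟩ := (hRmem _).mp h'
      simp only [Finset.mem_insert, Finset.mem_singleton, not_or] at hx hy
      exact Or.inr (Or.inr ⟨hmem, fun h => hx.1 h.symm, fun h => hy.1 h.symm,
        fun h => hx.2 h.symm, fun h => hy.2 h.symm⟩)
  have hnc1 : ∀ u v s t : Fin n, ({u, v} : Finset (Fin n)) ∈ D →
      ({s, t} : Finset (Fin n)) ∈ D → u < s → s < v → v < t → False := by
    intro u v s t huv hst l1 l2 l3
    have l1' : (u : ℕ) < s := l1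
    have l2' : (s : ℕ) < v := l2
    have l3' : (v : ℕ) < t := l3
    rcases memDpair u v huv with (⟨rfl, rfl⟩ | ⟨rfl, rfl⟩) | (⟨rfl, rfl⟩ | ⟨rfl, rfl⟩) |
      ⟨huv', hne1, hne2, hne3, hne4⟩
    · omega
    · omega
    · -- u = l, v = j
      rcases memDpair s t hst with (⟨rfl, rfl⟩ | ⟨rfl, rfl⟩) | (⟨rfl, rfl⟩ | ⟨rfl, rfl⟩) |
        ⟨hst', hne1, hne2, hne3, hne4⟩
      · omega
      · omega
      · omega
      · omega
      · exact arc_nc b hA hst' (flt (by omega)) (flt (by omega)) (flt (by omega))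
    · omega
    · rcases memDpair s t hst with (⟨rfl, rfl⟩ | ⟨rfl, rfl⟩) | (⟨rfl, rfl⟩ | ⟨rfl, rfl⟩) |
        ⟨hst', hne1', hne2', hne3', hne4'⟩
      · omega
      · omega
      · -- s = l, t = j
        have hux : (u : ℕ) ≠ x := fun h => hne1 (Fin.ext h)
        have huy : (u : ℕ) ≠ y := fun h => hne2 (Fin.ext h)
        rcases lt_or_gt_of_ne huy with h | h
        · exact arc_nc b huv' hA (flt (by omega)) (flt (by omega)) (flt (by omega))
        · exact arc_nc b hB huv' (flt (by omega)) (flt (by omega)) (flt (by omega))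
      · omega
      · exact arc_nc b huv' hst' l1 l2 l3
  have hnc2 : ∀ u v k : Fin n, ({u, v} : Finset (Fin n)) ∈ D → u < k → k < v →
      (∀ c ∈ D, k ∉ c) → False := by
    intro u v k huv l1 l2 hk
    have l1' : (u : ℕ) < k := l1
    have l2' : (k : ℕ) < v := l2
    have hkx : k ≠ x := fun h => hk _ ((memD _).mpr (Or.inl rfl)) (by rw [h]; simp)
    have hky : k ≠ y := fun h => hk _ ((memD _).mpr (Or.inl rfl)) (by rw [h]; simp)
    have hkj : k ≠ j := fun h => hk _ ((memD _).mpr (Or.inr (Or.inl rfl))) (by rw [h]; simp)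
    have hkl : k ≠ l := fun h => hk _ ((memD _).mpr (Or.inr (Or.inl rfl))) (by rw [h]; simp)
    have hkb : ¬ covered b.arcs k := by
      rintro ⟨e, he, hke⟩
      by_cases hx : x ∈ e
      · have := hxmem e he hx
        subst this
        rcases mem_pair' hke with rfl | rfl
        · exact hkx rfl
        · exact hkj rfl
      · by_cases hy : y ∈ e
        · have := hymem e he hy
          subst this
          rcases mem_pair' hke with rfl | rfl
          · exact hky rfl
          · exact hkl rfl
        · exact hk e ((memD _).mpr (Or.inr (Or.inr ((hRmem e).mpr ⟨he, hx, hy⟩)))) hke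
    rcases memDpair u v huv with (⟨rfl, rfl⟩ | ⟨rfl, rfl⟩) | (⟨rfl, rfl⟩ | ⟨rfl, rfl⟩) |
      ⟨huv', hne1, hne2, hne3, hne4⟩
    · omega
    · omega
    · exact arc_through b hA (flt (by omega)) (flt (by omega)) hkb
    · omega
    · exact arc_through b huv' l1 l2 hkb
  refine ⟨mk' D hpair hdisj hnc1 hnc2, ?_, ?_, ?_, ?_⟩
  · show D = newArcs x y b.arcs
    have hT : b.arcs.filter (fun c => x ∈ c ∨ y ∈ c)
        = {({x, j} : Finset (Fin n)), {y, l}} := by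
      ext e
      simp only [Finset.mem_filter, Finset.mem_insert, Finset.mem_singleton]
      constructor
      · rintro ⟨he, hx | hy⟩
        · exact Or.inl (hxmem e he hx)
        · exact Or.inr (hymem e he hy)
      · rintro (rfl | rfl)
        · exact ⟨hA, Or.inl (by simp)⟩
        · exact ⟨hB, Or.inr (by simp)⟩
    have hNA : newArcs x y b.arcs = insert {x, y} (R ∪
        (if ((((b.arcs.filter fun c => x ∈ c ∨ y ∈ c).biUnion id) \ {x, y}).card = 2)
          then {((b.arcs.filter fun c => x ∈ c ∨ y ∈ c).biUnion id) \ {x, y}}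
          else ∅)) := rfl
    have hP : ((b.arcs.filter fun c => x ∈ c ∨ y ∈ c).biUnion id) \ {x, y}
        = ({l, j} : Finset (Fin n)) := by
      rw [hT, Finset.biUnion_insert, Finset.singleton_biUnion]
      ext z
      simp only [Finset.mem_sdiff, Finset.mem_union, Finset.mem_insert,
        Finset.mem_singleton, id_eq, not_or]
      constructor
      · rintro ⟨(rfl | rfl) | (rfl | rfl), hz1, hz2⟩
        · exact absurd rfl hz1
        · exact Or.inr rfl
        · exact absurd rfl hz2
        · exact Or.inl rfl
      · rintro (rfl | rfl)
        · exact ⟨Or.inr (Or.inr rfl), fne (by omega), fne (by omega)⟩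
        · exact ⟨Or.inl (Or.inr rfl), fne (by omega), fne (by omega)⟩
    rw [hNA, hP]
    rw [if_pos (Finset.card_pair (fne (show (l : ℕ) ≠ j by omega)))]
    rw [Finset.union_comm, ← Finset.insert_eq]
  · show D.card = b.arcs.card
    rw [hDdef, barcs]
    rw [Finset.card_insert_of_notMem (by
      simp only [Finset.mem_insert, not_or]; exact ⟨hxyN, hxyR⟩)]
    rw [Finset.card_insert_of_notMem hNR]
    rw [Finset.card_insert_of_notMem (by
      simp only [Finset.mem_insert, not_or]; exact ⟨hAne, hAR⟩)]
    rw [Finset.card_insert_of_notMem hBR]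
  all_goals {
    have hh := fun m => ht_of_arcs_eq₂ (c := mk' D hpair hdisj hnc1 hnc2) (b := b)
      (R := R) (e1 := {x, y}) (e2 := {l, j}) (f1 := {x, j}) (f2 := {y, l})
      (by show D = _; rw [hDdef]) barcs
      (by simp only [Finset.mem_insert, not_or]; exact ⟨hxyN, hxyR⟩) hNR
      (by simp only [Finset.mem_insert, not_or]; exact ⟨hAne, hAR⟩) hBR m
    first
      | (intro m
         have := hh m
         rw [ind_pair (by omega), ind_pair (by omega), ind_pair (by omega),
           ind_pair (by omega)] at this
         rw [this]
         split_ifs <;> omega)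
      | (have := hh ((x : ℕ) + 1)
         rw [ind_pair (by omega), ind_pair (by omega), ind_pair (by omega),
           ind_pair (by omega)] at this
         rw [this]
         split_ifs <;> omega)
  }

theorem case_left (b : HalfDiag n) (x y j : Fin n) (hxy : (y : ℕ) = (x : ℕ) + 1)
    (hA : ({j, x} : Finset (Fin n)) ∈ b.arcs) (hj : (j : ℕ) < (x : ℕ))
    (hy : ¬ covered b.arcs y) :
    ∃ c : HalfDiag n, c.arcs = newArcs x y b.arcs ∧ c.arcs.card = b.arcs.card ∧
      ∀ m : ℕ, ht c m = ht b m + (if m = (x : ℕ) + 1 then 2 else 0) := by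
  classical
  set R := b.arcs.filter (fun c => x ∉ c ∧ y ∉ c) with hRdef
  have hRmem : ∀ e, e ∈ R ↔ e ∈ b.arcs ∧ x ∉ e ∧ y ∉ e := by
    intro e; simp [hRdef]
  have hxmem : ∀ e ∈ b.arcs, x ∈ e → e = {j, x} := fun e he hx =>
    arc_unique b he hA hx (by simp)
  have hjmem : ∀ e ∈ b.arcs, j ∈ e → e = {j, x} := fun e he hz =>
    arc_unique b he hA hz (by simp)
  have hynone : ∀ e ∈ b.arcs, y ∉ e := fun e he hy' => hy ⟨e, he, hy'⟩
  have hAR : ({j, x} : Finset (Fin n)) ∉ R := by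
    intro h; exact ((hRmem _).mp h).2.1 (by simp)
  have hxyR : ({x, y} : Finset (Fin n)) ∉ R := by
    intro h; exact ((hRmem _).mp h).2.1 (by simp)
  have barcs : b.arcs = insert {j, x} R := by
    ext e
    simp only [Finset.mem_insert]
    constructor
    · intro he
      by_cases hx : x ∈ e
      · exact Or.inl (hxmem e he hx)
      · exact Or.inr ((hRmem e).mpr ⟨he, hx, hynone e he⟩)
    · rintro (rfl | he)
      · exact hA
      · exact ((hRmem e).mp he).1
  set D : Finset (Finset (Fin n)) := insert {x, y} R with hDdef
  have memD : ∀ e, e ∈ D ↔ e = {x, y} ∨ e ∈ R := by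
    intro e; simp [hDdef]
  have hpair : ∀ c ∈ D, ∃ u v : Fin n, u < v ∧ c = {u, v} := by
    intro c hc
    rcases (memD c).mp hc with rfl | hc'
    · exact ⟨x, y, flt (by omega), rfl⟩
    · exact arc_pair b ((hRmem _).mp hc').1
  have hdisj : ∀ c ∈ D, ∀ e ∈ D, c ≠ e → Disjoint c e := by
    intro c hc e he hne
    rw [Finset.disjoint_left]
    intro z hzc hze
    rcases (memD c).mp hc with rfl | hc' <;> rcases (memD e).mp he with rfl | he'
    · exact hne rfl
    · rcases mem_pair' hzc with rfl | rfl
      · exact ((hRmem _).mp he').2.1 hze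
      · exact ((hRmem _).mp he').2.2 hze
    · rcases mem_pair' hze with rfl | rfl
      · exact ((hRmem _).mp hc').2.1 hzc
      · exact ((hRmem _).mp hc').2.2 hzc
    · exact Finset.disjoint_left.mp
        (b.disj c ((hRmem _).mp hc').1 e ((hRmem _).mp he').1 hne) hzc hze
  have memDpair : ∀ u v : Fin n, ({u, v} : Finset (Fin n)) ∈ D →
      ((u = x ∧ v = y) ∨ (u = y ∧ v = x)) ∨
        (({u, v} : Finset (Fin n)) ∈ b.arcs ∧ u ≠ x ∧ u ≠ y ∧ v ≠ x ∧ v ≠ y) := by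
    intro u v h
    rcases (memD _).mp h with h' | h'
    · rw [pair_eq_iff] at h'; exact Or.inl h'
    · obtain ⟨hmem, hx, hy'⟩ := (hRmem _).mp h'
      simp only [Finset.mem_insert, Finset.mem_singleton, not_or] at hx hy'
      exact Or.inr ⟨hmem, fun h => hx.1 h.symm, fun h => hy'.1 h.symm,
        fun h => hx.2 h.symm, fun h => hy'.2 h.symm⟩
  have hnc1 : ∀ u v s t : Fin n, ({u, v} : Finset (Fin n)) ∈ D →
      ({s, t} : Finset (Fin n)) ∈ D → u < s → s < v → v < t → False := by
    intro u v s t huv hst l1 l2 l3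
    have l1' : (u : ℕ) < s := l1
    have l2' : (s : ℕ) < v := l2
    have l3' : (v : ℕ) < t := l3
    rcases memDpair u v huv with (⟨rfl, rfl⟩ | ⟨rfl, rfl⟩) |
      ⟨huv', hne1, hne2, hne3, hne4⟩
    · omega
    · omega
    · rcases memDpair s t hst with (⟨rfl, rfl⟩ | ⟨rfl, rfl⟩) |
        ⟨hst', hne1', hne2', hne3', hne4'⟩
      · omega
      · omega
      · exact arc_nc b huv' hst' l1 l2 l3
  have hnc2 : ∀ u v k : Fin n, ({u, v} : Finset (Fin n)) ∈ D → u < k → k < v →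
      (∀ c ∈ D, k ∉ c) → False := by
    intro u v k huv l1 l2 hk
    have l1' : (u : ℕ) < k := l1
    have l2' : (k : ℕ) < v := l2
    have hkx : k ≠ x := fun h => hk _ ((memD _).mpr (Or.inl rfl)) (by rw [h]; simp)
    have hky : k ≠ y := fun h => hk _ ((memD _).mpr (Or.inl rfl)) (by rw [h]; simp)
    rcases memDpair u v huv with (⟨rfl, rfl⟩ | ⟨rfl, rfl⟩) |
      ⟨huv', hne1, hne2, hne3, hne4⟩
    · omega
    · omega
    · by_cases hkj : k = j
      · subst hkj
        -- k = j lies inside the untouched arc {u,v}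
        have hvx : (v : ℕ) ≠ x := fun h => hne3 (Fin.ext h)
        rcases lt_or_gt_of_ne hvx with h | h
        · exact arc_nc b huv' hA l1 (flt (by omega)) (flt (by omega))
        · have hvy : (v : ℕ) ≠ y := fun h => hne4 (Fin.ext h)
          exact arc_through b huv' (flt (by omega)) (flt (by omega)) hy
      · have hkb : ¬ covered b.arcs k := by
          rintro ⟨e, he, hke⟩
          by_cases hx : x ∈ e
          · have := hxmem e he hx
            subst this
            rcases mem_pair' hke with rfl | rfl
            · exact hkj rfl
            · exact hkx rfl
          · exact hk e ((memD _).mpr (Or.inr ((hRmem e).mpr ⟨he, hx, hynone e he⟩))) hke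
        exact arc_through b huv' l1 l2 hkb
  refine ⟨mk' D hpair hdisj hnc1 hnc2, ?_, ?_, ?_⟩
  · show D = newArcs x y b.arcs
    have hT : b.arcs.filter (fun c => x ∈ c ∨ y ∈ c)
        = {({j, x} : Finset (Fin n))} := by
      ext e
      simp only [Finset.mem_filter, Finset.mem_singleton]
      constructor
      · rintro ⟨he, hx | hy'⟩
        · exact hxmem e he hx
        · exact absurd hy' (hynone e he)
      · rintro rfl
        exact ⟨hA, Or.inl (by simp)⟩
    have hNA : newArcs x y b.arcs = insert {x, y} (R ∪
        (if ((((b.arcs.filter fun c => x ∈ c ∨ y ∈ c).biUnion id) \ {x, y}).card = 2)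
          then {((b.arcs.filter fun c => x ∈ c ∨ y ∈ c).biUnion id) \ {x, y}}
          else ∅)) := rfl
    have hP : ((b.arcs.filter fun c => x ∈ c ∨ y ∈ c).biUnion id) \ {x, y}
        = ({j} : Finset (Fin n)) := by
      rw [hT, Finset.singleton_biUnion]
      ext z
      simp only [Finset.mem_sdiff, Finset.mem_insert, Finset.mem_singleton,
        id_eq, not_or]
      constructor
      · rintro ⟨rfl | rfl, hz1, hz2⟩
        · rfl
        · exact absurd rfl hz1
      · rintro rfl
        exact ⟨Or.inl rfl, fne (by omega), fne (by omega)⟩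
    rw [hNA, hP]
    rw [if_neg (by rw [Finset.card_singleton]; omega), Finset.union_empty]
  · show D.card = b.arcs.card
    rw [hDdef, barcs]
    rw [Finset.card_insert_of_notMem hxyR, Finset.card_insert_of_notMem hAR]
  · intro m
    have hh := ht_of_arcs_eq₁ (c := mk' D hpair hdisj hnc1 hnc2) (b := b)
      (R := R) (e1 := {x, y}) (f1 := {j, x})
      (by show D = _; rw [hDdef]) barcs hxyR hAR m
    rw [hh, ind_pair (by omega), ind_pair (by omega)]
    split_ifs <;> omega

theorem case_right (b : HalfDiag n) (x y l : Fin n) (hxy : (y : ℕ) = (x : ℕ) + 1)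
    (hB : ({y, l} : Finset (Fin n)) ∈ b.arcs) (hl : (y : ℕ) < (l : ℕ))
    (hx : ¬ covered b.arcs x) :
    ∃ c : HalfDiag n, c.arcs = newArcs x y b.arcs ∧ c.arcs.card = b.arcs.card ∧
      (∀ m : ℕ, ht c m ≤ ht b m) ∧ ht c ((x : ℕ) + 1) = ht b ((x : ℕ) + 1) := by
  classical
  set R := b.arcs.filter (fun c => x ∉ c ∧ y ∉ c) with hRdef
  have hRmem : ∀ e, e ∈ R ↔ e ∈ b.arcs ∧ x ∉ e ∧ y ∉ e := by
    intro e; simp [hRdef]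
  have hymem : ∀ e ∈ b.arcs, y ∈ e → e = {y, l} := fun e he hy =>
    arc_unique b he hB hy (by simp)
  have hlmem : ∀ e ∈ b.arcs, l ∈ e → e = {y, l} := fun e he hz =>
    arc_unique b he hB hz (by simp)
  have hxnone : ∀ e ∈ b.arcs, x ∉ e := fun e he hx' => hx ⟨e, he, hx'⟩
  have hBR : ({y, l} : Finset (Fin n)) ∉ R := by
    intro h; exact ((hRmem _).mp h).2.2 (by simp)
  have hxyR : ({x, y} : Finset (Fin n)) ∉ R := by
    intro h; exact ((hRmem _).mp h).2.1 (by simp)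
  have barcs : b.arcs = insert {y, l} R := by
    ext e
    simp only [Finset.mem_insert]
    constructor
    · intro he
      by_cases hy : y ∈ e
      · exact Or.inl (hymem e he hy)
      · exact Or.inr ((hRmem e).mpr ⟨he, hxnone e he, hy⟩)
    · rintro (rfl | he)
      · exact hB
      · exact ((hRmem e).mp he).1
  set D : Finset (Finset (Fin n)) := insert {x, y} R with hDdef
  have memD : ∀ e, e ∈ D ↔ e = {x, y} ∨ e ∈ R := by
    intro e; simp [hDdef]
  have hpair : ∀ c ∈ D, ∃ u v : Fin n, u < v ∧ c = {u, v} := by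
    intro c hc
    rcases (memD c).mp hc with rfl | hc'
    · exact ⟨x, y, flt (by omega), rfl⟩
    · exact arc_pair b ((hRmem _).mp hc').1
  have hdisj : ∀ c ∈ D, ∀ e ∈ D, c ≠ e → Disjoint c e := by
    intro c hc e he hne
    rw [Finset.disjoint_left]
    intro z hzc hze
    rcases (memD c).mp hc with rfl | hc' <;> rcases (memD e).mp he with rfl | he'
    · exact hne rfl
    · rcases mem_pair' hzc with rfl | rfl
      · exact ((hRmem _).mp he').2.1 hze
      · exact ((hRmem _).mp he').2.2 hze
    · rcases mem_pair' hze with rfl | rfl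
      · exact ((hRmem _).mp hc').2.1 hzc
      · exact ((hRmem _).mp hc').2.2 hzc
    · exact Finset.disjoint_left.mp
        (b.disj c ((hRmem _).mp hc').1 e ((hRmem _).mp he').1 hne) hzc hze
  have memDpair : ∀ u v : Fin n, ({u, v} : Finset (Fin n)) ∈ D →
      ((u = x ∧ v = y) ∨ (u = y ∧ v = x)) ∨
        (({u, v} : Finset (Fin n)) ∈ b.arcs ∧ u ≠ x ∧ u ≠ y ∧ v ≠ x ∧ v ≠ y) := by
    intro u v h
    rcases (memD _).mp h with h' | h'
    · rw [pair_eq_iff] at h'; exact Or.inl h'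
    · obtain ⟨hmem, hx', hy'⟩ := (hRmem _).mp h'
      simp only [Finset.mem_insert, Finset.mem_singleton, not_or] at hx' hy'
      exact Or.inr ⟨hmem, fun h => hx'.1 h.symm, fun h => hy'.1 h.symm,
        fun h => hx'.2 h.symm, fun h => hy'.2 h.symm⟩
  have hnc1 : ∀ u v s t : Fin n, ({u, v} : Finset (Fin n)) ∈ D →
      ({s, t} : Finset (Fin n)) ∈ D → u < s → s < v → v < t → False := by
    intro u v s t huv hst l1 l2 l3
    have l1' : (u : ℕ) < s := l1
    have l2' : (s : ℕ) < v := l2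
    have l3' : (v : ℕ) < t := l3
    rcases memDpair u v huv with (⟨rfl, rfl⟩ | ⟨rfl, rfl⟩) |
      ⟨huv', hne1, hne2, hne3, hne4⟩
    · omega
    · omega
    · rcases memDpair s t hst with (⟨rfl, rfl⟩ | ⟨rfl, rfl⟩) |
        ⟨hst', hne1', hne2', hne3', hne4'⟩
      · omega
      · omega
      · exact arc_nc b huv' hst' l1 l2 l3
  have hnc2 : ∀ u v k : Fin n, ({u, v} : Finset (Fin n)) ∈ D → u < k → k < v →
      (∀ c ∈ D, k ∉ c) → False := by
    intro u v k huv l1 l2 hk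
    have l1' : (u : ℕ) < k := l1
    have l2' : (k : ℕ) < v := l2
    have hkx : k ≠ x := fun h => hk _ ((memD _).mpr (Or.inl rfl)) (by rw [h]; simp)
    have hky : k ≠ y := fun h => hk _ ((memD _).mpr (Or.inl rfl)) (by rw [h]; simp)
    rcases memDpair u v huv with (⟨rfl, rfl⟩ | ⟨rfl, rfl⟩) |
      ⟨huv', hne1, hne2, hne3, hne4⟩
    · omega
    · omega
    · by_cases hkl : k = l
      · subst hkl
        have huy : (u : ℕ) ≠ y := fun h => hne2 (Fin.ext h)
        rcases lt_or_gt_of_ne huy with h | h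
        · -- u < y : then x is an uncovered point inside {u,v}
          have hux : (u : ℕ) ≠ x := fun h => hne1 (Fin.ext h)
          exact arc_through b huv' (flt (by omega)) (flt (by omega)) hx
        · -- y < u : the arcs {y,l} and {u,v} cross
          exact arc_nc b hB huv' (flt (by omega)) (flt (by omega)) (flt (by omega))
      · have hkb : ¬ covered b.arcs k := by
          rintro ⟨e, he, hke⟩
          by_cases hy : y ∈ e
          · have := hymem e he hy
            subst this
            rcases mem_pair' hke with rfl | rfl
            · exact hky rfl
            · exact hkl rfl
          · exact hk e ((memD _).mpr (Or.inr ((hRmem e).mpr ⟨he, hxnone e he, hy⟩))) hke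
        exact arc_through b huv' l1 l2 hkb
  refine ⟨mk' D hpair hdisj hnc1 hnc2, ?_, ?_, ?_, ?_⟩
  · show D = newArcs x y b.arcs
    have hT : b.arcs.filter (fun c => x ∈ c ∨ y ∈ c)
        = {({y, l} : Finset (Fin n))} := by
      ext e
      simp only [Finset.mem_filter, Finset.mem_singleton]
      constructor
      · rintro ⟨he, hx' | hy'⟩
        · exact absurd hx' (hxnone e he)
        · exact hymem e he hy'
      · rintro rfl
        exact ⟨hB, Or.inr (by simp)⟩
    have hNA : newArcs x y b.arcs = insert {x, y} (R ∪
        (if ((((b.arcs.filter fun c => x ∈ c ∨ y ∈ c).biUnion id) \ {x, y}).card = 2)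
          then {((b.arcs.filter fun c => x ∈ c ∨ y ∈ c).biUnion id) \ {x, y}}
          else ∅)) := rfl
    have hP : ((b.arcs.filter fun c => x ∈ c ∨ y ∈ c).biUnion id) \ {x, y}
        = ({l} : Finset (Fin n)) := by
      rw [hT, Finset.singleton_biUnion]
      ext z
      simp only [Finset.mem_sdiff, Finset.mem_insert, Finset.mem_singleton,
        id_eq, not_or]
      constructor
      · rintro ⟨rfl | rfl, hz1, hz2⟩
        · exact absurd rfl hz2
        · rfl
      · rintro rfl
        exact ⟨Or.inr rfl, fne (by omega), fne (by omega)⟩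
    rw [hNA, hP]
    rw [if_neg (by rw [Finset.card_singleton]; omega), Finset.union_empty]
  · show D.card = b.arcs.card
    rw [hDdef, barcs]
    rw [Finset.card_insert_of_notMem hxyR, Finset.card_insert_of_notMem hBR]
  all_goals {
    have hh := fun m => ht_of_arcs_eq₁ (c := mk' D hpair hdisj hnc1 hnc2) (b := b)
      (R := R) (e1 := {x, y}) (f1 := {y, l})
      (by show D = _; rw [hDdef]) barcs hxyR hBR m
    first
      | (intro m
         have := hh m
         rw [ind_pair (by omega), ind_pair (by omega)] at this
         rw [this]
         split_ifs <;> omega)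
      | (have := hh ((x : ℕ) + 1)
         rw [ind_pair (by omega), ind_pair (by omega)] at this
         rw [this]
         split_ifs <;> omega)
  }

theorem ht_card (a : HalfDiag n) : ht a n = (n : ℤ) - 2 * (a.arcs.card : ℤ) := by
  rw [ht]
  have hf : Finset.filter (fun c => ∀ x : Fin n, x ∈ c → (x : ℕ) < n) a.arcs = a.arcs :=
    Finset.filter_true_of_mem (fun c _ x _ => x.isLt)
  rw [hf]

theorem Eact_cases (q : ℂ) (b : HalfDiag n) (i : ℕ) (h1 : 1 ≤ i) (h2 : i < n)
    (hno : ({⟨i - 1, by omega⟩, ⟨i, h2⟩} : Finset (Fin n)) ∉ b.arcs)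
    (hcov : covered b.arcs ⟨i - 1, by omega⟩ ∨ covered b.arcs ⟨i, h2⟩) :
    ∃ c : HalfDiag n, Eact q i b = xi c ∧ c.arcs.card = b.arcs.card ∧
      (∀ m : ℕ, m ≠ i → ht c m ≤ ht b m) ∧
      (ht c i = ht b i ∨ ht c i = ht b i + 2) ∧
      (ht c i = ht b i + 2 → ∀ m : ℕ, m ≠ i → ht c m = ht b m) ∧
      (isMax b ⟨i - 1, by omega⟩ → ¬ isMax b ⟨i, h2⟩ → ht c i = ht b i + 2) := by
  classical
  set x : Fin n := ⟨i - 1, by omega⟩ with hxdef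
  set y : Fin n := ⟨i, h2⟩ with hydef
  have hxv : (x : ℕ) = i - 1 := rfl
  have hyv : (y : ℕ) = i := rfl
  have hxy : (y : ℕ) = (x : ℕ) + 1 := by omega
  have hcv : ¬(¬ covered b.arcs x ∧ ¬ covered b.arcs y) := by tauto
  by_cases hcx : covered b.arcs x
  · obtain ⟨j, hjx, hj⟩ := covered_ex b hcx
    have hjx' : (j : ℕ) ≠ (x : ℕ) := fun h => hjx (Fin.ext h)
    rcases lt_or_gt_of_ne hjx' with hlt | hgt
    · -- j < x : x is the larger endpoint of {j,x}
      have hA : ({j, x} : Finset (Fin n)) ∈ b.arcs := by rwa [Finset.pair_comm] at hj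
      by_cases hcy : covered b.arcs y
      · obtain ⟨l, hly, hlarc⟩ := covered_ex b hcy
        have hly' : (l : ℕ) ≠ (y : ℕ) := fun h => hly (Fin.ext h)
        rcases lt_or_gt_of_ne hly' with hllt | hlgt
        · -- l < y : case (−,−)
          have hB : ({l, y} : Finset (Fin n)) ∈ b.arcs := by rwa [Finset.pair_comm] at hlarc
          have hlx : (l : ℕ) ≠ (x : ℕ) := by
            intro h
            have heq := arc_unique b hB hA (x := x) (by
              rw [Finset.mem_insert]; exact Or.inl (Fin.ext h).symm) (by simp)
            rw [pair_eq_iff] at heq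
            rcases heq with ⟨h1', h2'⟩ | ⟨h1', h2'⟩
            · have := congrArg Fin.val h1'; omega
            · have := congrArg Fin.val h1'; omega
          have hlj : (l : ℕ) ≠ (j : ℕ) := by
            intro h
            have heq := arc_unique b hB hA (x := j) (by
              rw [Finset.mem_insert]; exact Or.inl (Fin.ext h).symm) (by simp)
            rw [pair_eq_iff] at heq
            rcases heq with ⟨h1', h2'⟩ | ⟨h1', h2'⟩
            · have := congrArg Fin.val h1'; omega
            · have := congrArg Fin.val h2'; omega
          have hljlt : (l : ℕ) < (j : ℕ) := by
            rcases lt_or_gt_of_ne hlj with h | h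
            · exact h
            · exact absurd (arc_nc b hA hB (flt (by omega)) (flt (by omega))
                (flt (by omega))) not_false
          obtain ⟨c, harcs, hcard, hle, heq⟩ := case_mm b x y j l hxy hA hB hlt hljlt
          refine ⟨c, Eact_eq_xi q b i h1 h2 hno hcv c harcs, hcard,
            fun m _ => hle m, Or.inl (by rw [show i = (x : ℕ) + 1 by omega]; exact heq), ?_, ?_⟩
          · intro h
            exfalso
            rw [show (x : ℕ) + 1 = i by omega] at heq
            omega
          · intro _ hM2
            exact absurd ⟨l, flt (by omega), hB⟩ hM2
        · -- l > y : nested case, box addition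
          obtain ⟨c, harcs, hcard, hf⟩ := case_nested b x y j l hxy hA hlarc hlt hlgt
          refine ⟨c, Eact_eq_xi q b i h1 h2 hno hcv c harcs, hcard, ?_, ?_, ?_, ?_⟩
          · intro m hm
            have := hf m
            rw [if_neg (by omega)] at this
            omega
          · refine Or.inr ?_
            have := hf i
            rw [if_pos (by omega)] at this
            omega
          · intro _ m hm
            have := hf m
            rw [if_neg (by omega)] at this
            omega
          · intro _ _
            have := hf i
            rw [if_pos (by omega)] at this
            omega
      · -- y uncovered : box addition
        obtain ⟨c, harcs, hcard, hf⟩ := case_left b x y j hxy hA hlt hcy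
        refine ⟨c, Eact_eq_xi q b i h1 h2 hno hcv c harcs, hcard, ?_, ?_, ?_, ?_⟩
        · intro m hm
          have := hf m
          rw [if_neg (by omega)] at this
          omega
        · refine Or.inr ?_
          have := hf i
          rw [if_pos (by omega)] at this
          omega
        · intro _ m hm
          have := hf m
          rw [if_neg (by omega)] at this
          omega
        · intro _ _
          have := hf i
          rw [if_pos (by omega)] at this
          omega
    · -- j > x
      have hjy : (j : ℕ) ≠ (y : ℕ) := by
        intro h
        apply hno
        have : j = y := Fin.ext h
        rwa [this] at hj
      have hcy : covered b.arcs y := by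
        by_contra hcy
        exact arc_through b hj (flt (by omega)) (flt (by omega)) hcy
      obtain ⟨l, hly, hlarc⟩ := covered_ex b hcy
      have hly' : (l : ℕ) ≠ (y : ℕ) := fun h => hly (Fin.ext h)
      have hlx : (l : ℕ) ≠ (x : ℕ) := by
        intro h
        have heqq := arc_unique b hlarc hj (x := x) (by
          rw [Finset.mem_insert, Finset.mem_singleton]
          exact Or.inr (Fin.ext h).symm) (by simp)
        rw [pair_eq_iff] at heqq
        rcases heqq with ⟨h1', h2'⟩ | ⟨h1', h2'⟩
        · have := congrArg Fin.val h1'; omega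
        · have := congrArg Fin.val h1'; omega
      have hlj : (l : ℕ) ≠ (j : ℕ) := by
        intro h
        have heq := arc_unique b hlarc hj (x := j) (by
          rw [Finset.mem_insert, Finset.mem_singleton]
          exact Or.inr (Fin.ext h).symm) (by simp)
        rw [pair_eq_iff] at heq
        rcases heq with ⟨h1', h2'⟩ | ⟨h1', h2'⟩
        · have := congrArg Fin.val h1'; omega
        · have := congrArg Fin.val h1'; omega
      have hlgty : (y : ℕ) < (l : ℕ) := by
        rcases lt_or_gt_of_ne hly' with h | h
        · exfalso
          have hB : ({l, y} : Finset (Fin n)) ∈ b.arcs := by rwa [Finset.pair_comm] at hlarc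
          exact arc_nc b hB hj (flt (by omega)) (flt (by omega)) (flt (by omega))
        · exact h
      have hllt : (l : ℕ) < (j : ℕ) := by
        rcases lt_or_gt_of_ne hlj with h | h
        · exact h
        · exact absurd (arc_nc b hj hlarc (flt (by omega)) (flt (by omega))
            (flt (by omega))) not_false
      obtain ⟨c, harcs, hcard, hle, heq⟩ := case_pp b x y j l hxy hj hlarc hllt hlgty
      refine ⟨c, Eact_eq_xi q b i h1 h2 hno hcv c harcs, hcard,
        fun m _ => hle m, Or.inl (by rw [show i = (x : ℕ) + 1 by omega]; exact heq), ?_, ?_⟩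
      · intro h
        exfalso
        rw [show (x : ℕ) + 1 = i by omega] at heq
        omega
      · intro hM1 _
        exfalso
        obtain ⟨w, hwx, hwarc⟩ := hM1
        have heqw := arc_unique b hwarc hj (x := x) (by simp) (by simp)
        rw [pair_eq_iff] at heqw
        have hwx' : (w : ℕ) < (x : ℕ) := hwx
        rcases heqw with ⟨h1', h2'⟩ | ⟨h1', h2'⟩
        · have := congrArg Fin.val h1'; omega
        · have e1 := congrArg Fin.val h1'
          omega
  · -- x uncovered
    have hcy : covered b.arcs y := hcov.resolve_left hcx
    obtain ⟨l, hly, hlarc⟩ := covered_ex b hcy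
    have hly' : (l : ℕ) ≠ (y : ℕ) := fun h => hly (Fin.ext h)
    have hlx : (l : ℕ) ≠ (x : ℕ) := by
      intro h
      exact hcx ⟨{y, l}, hlarc, by
        rw [Finset.mem_insert, Finset.mem_singleton]; exact Or.inr (Fin.ext h).symm⟩
    have hlgty : (y : ℕ) < (l : ℕ) := by
      rcases lt_or_gt_of_ne hly' with h | h
      · exfalso
        have hB : ({l, y} : Finset (Fin n)) ∈ b.arcs := by rwa [Finset.pair_comm] at hlarc
        exact arc_through b hB (flt (by omega)) (flt (by omega)) hcx
      · exact h
    obtain ⟨c, harcs, hcard, hle, heq⟩ := case_right b x y l hxy hlarc hlgty hcx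
    refine ⟨c, Eact_eq_xi q b i h1 h2 hno hcv c harcs, hcard,
      fun m _ => hle m, Or.inl (by rw [show i = (x : ℕ) + 1 by omega]; exact heq), ?_, ?_⟩
    · intro h
      exfalso
      rw [show (x : ℕ) + 1 = i by omega] at heq
      omega
    · intro hM1 _
      exfalso
      obtain ⟨w, hwx, hwarc⟩ := hM1
      exact hcx ⟨{w, x}, hwarc, by simp⟩

theorem Eop_xi (q : ℂ) (i : ℕ) (b : HalfDiag n) : Eop q n i (xi b) = Eact q i b := by
  rw [Eop, xi]
  rw [Finsupp.lsum_single]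
  rw [LinearMap.toSpanSingleton_apply, one_smul]

/-- The set of basis vectors strictly below `a` in the height-domination order. -/
def lowSet (p : ℕ) (a : HalfDiag n) : Set (V n) :=
  {v : V n | ∃ b : HalfDiag n, b.arcs.card = p ∧ b ≠ a ∧
    (∀ i ≤ n, ht b i ≤ ht a i) ∧ v = xi b}

theorem step_main (q : ℝ) (μ : ℂ) (p : ℕ) (a a' : HalfDiag n) (i : ℕ)
    (hbox : IsBoxAdd a a' i) (hca : a.arcs.card = p) (w : V n)
    (hw : w - xi a ∈ Submodule.span ℂ (lowSet p a)) :
    a'.arcs.card = p ∧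
      (Eop (q : ℂ) n i w - μ • w) - xi a' ∈ Submodule.span ℂ (lowSet p a') := by
  classical
  obtain ⟨hi1, hin, hm1, hm2, he, hother⟩ := hbox
  have h2 : i < n := by omega
  set x : Fin n := ⟨i - 1, by omega⟩ with hxdef
  set y : Fin n := ⟨i, h2⟩ with hydef
  have hMx : isMax a x := by
    apply isMax_of_ht_lt a (i - 1) (by omega)
    rw [show i - 1 + 1 = i by omega]
    exact hm1
  have hMy : ¬ isMax a y := not_isMax_of_ht_lt a i h2 hm2
  have hno : ({x, y} : Finset (Fin n)) ∉ a.arcs := by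
    intro h
    exact hMy ⟨x, flt (by simp [hxdef, hydef]; omega), h⟩
  have hcov : covered a.arcs x ∨ covered a.arcs y := by
    obtain ⟨j, _, hjarc⟩ := hMx
    exact Or.inl ⟨{j, x}, hjarc, by simp⟩
  obtain ⟨c, hEact, hcard, hle, hdisj, hup, hmincl⟩ :=
    Eact_cases (q : ℂ) a i hi1 h2 hno hcov
  have hup2 : ht c i = ht a i + 2 := hmincl hMx hMy
  have heqm : ∀ m : ℕ, m ≠ i → ht c m = ht a m := hup hup2
  have hc_eq : c = a' := by
    apply eq_of_ht_eq
    intro m hm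
    by_cases hmi : m = i
    · subst hmi
      omega
    · have := heqm m hmi
      have := hother m hm hmi
      omega
  have hcarda' : a'.arcs.card = p := by
    have hni : n ≠ i := by omega
    have h1 := hother n le_rfl hni
    have h2' := ht_card a
    have h3 := ht_card a'
    have : (a'.arcs.card : ℤ) = (a.arcs.card : ℤ) := by omega
    have : a'.arcs.card = a.arcs.card := by exact_mod_cast this
    omega
  refine ⟨hcarda', ?_⟩
  have hEa : Eop (q : ℂ) n i (xi a) = xi a' := by
    rw [Eop_xi, hEact, hc_eq]
  have hsub : lowSet p a ⊆ lowSet p a' := by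
    rintro v ⟨e, hce, hnea, hlee, rfl⟩
    refine ⟨e, hce, ?_, ?_, rfl⟩
    · intro hh
      subst hh
      have := hlee i (by omega)
      omega
    · intro m hm
      by_cases hmi : m = i
      · subst hmi
        have := hlee m (by omega)
        omega
      · have := hlee m hm
        have := hother m hm hmi
        omega
  have hxa' : xi a ∈ lowSet p a' := by
    refine ⟨a, hca, ?_, ?_, rfl⟩
    · intro hh
      rw [hh] at he
      omega
    · intro m hm
      by_cases hmi : m = i
      · subst hmi; omega
      · rw [hother m hm hmi]
  have hgen : ∀ v ∈ lowSet p a, Eop (q : ℂ) n i v ∈ Submodule.span ℂ (lowSet p a') := by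
    rintro v ⟨e, hce, hnea, hlee, rfl⟩
    rw [Eop_xi]
    by_cases hxyE : ({x, y} : Finset (Fin n)) ∈ e.arcs
    · have hval : Eact (q : ℂ) i e = (q : ℂ) • xi e := by
        unfold Eact
        rw [dif_pos (⟨hi1, h2⟩ : 1 ≤ i ∧ i < n), if_pos hxyE]
      rw [hval]
      exact Submodule.smul_mem _ _ (Submodule.subset_span
        (hsub ⟨e, hce, hnea, hlee, rfl⟩))
    · by_cases hcvE : ¬ covered e.arcs x ∧ ¬ covered e.arcs y
      · have hval : Eact (q : ℂ) i e = 0 := by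
          unfold Eact
          rw [dif_pos (⟨hi1, h2⟩ : 1 ≤ i ∧ i < n), if_neg hxyE, if_pos hcvE]
        rw [hval]
        exact Submodule.zero_mem _
      · rw [not_and_or, not_not, not_not] at hcvE
        obtain ⟨c', hE', hcard', hle', hdisj', hup', _⟩ :=
          Eact_cases (q : ℂ) e i hi1 h2 hxyE hcvE
        rw [hE']
        apply Submodule.subset_span
        refine ⟨c', by rw [hcard', hce], ?_, ?_, rfl⟩
        · -- c' ≠ a'
          intro hh
          subst hh
          rcases hdisj' with hd | hd
          · have := hlee i (by omega)
            omega
          · have hne : ∃ m, m ≤ n ∧ ht e m ≠ ht a m := by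
              by_contra hh'
              push_neg at hh'
              exact hnea (eq_of_ht_eq e a (fun m hm => hh' m hm))
            obtain ⟨m, hm, hnem⟩ := hne
            by_cases hmi : m = i
            · subst hmi
              have := hlee m (by omega)
              omega
            · have := hup' hd m hmi
              have := hlee m hm
              have := hother m hm hmi
              omega
        · intro m hm
          by_cases hmi : m = i
          · subst hmi
            have := hlee m (by omega)
            rcases hdisj' with hd | hd <;> omega
          · have := hle' m hmi
            have := hlee m hm
            have := hother m hm hmi
            omega
  have hEs : ∀ v ∈ Submodule.span ℂ (lowSet p a),
      Eop (q : ℂ) n i v ∈ Submodule.span ℂ (lowSet p a') := by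
    have hle0 : Submodule.span ℂ (lowSet p a) ≤
        (Submodule.span ℂ (lowSet p a')).comap (Eop (q : ℂ) n i) := by
      rw [Submodule.span_le]
      intro v hv
      exact hgen v hv
    intro v hv
    exact Submodule.mem_comap.mp (hle0 hv)
  have halg : (Eop (q : ℂ) n i w - μ • w) - xi a'
      = Eop (q : ℂ) n i (w - xi a) - μ • (w - xi a) - μ • xi a := by
    have hw0 : w = (w - xi a) + xi a := by abel
    calc (Eop (q : ℂ) n i w - μ • w) - xi a'
        = (Eop (q : ℂ) n i ((w - xi a) + xi a) - μ • ((w - xi a) + xi a)) - xi a' := by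
          rw [← hw0]
      _ = Eop (q : ℂ) n i (w - xi a) - μ • (w - xi a) - μ • xi a := by
          rw [map_add, smul_add, hEa]
          abel
  rw [halg]
  refine Submodule.sub_mem _ (Submodule.sub_mem _ ?_ ?_) ?_
  · exact hEs _ hw
  · exact Submodule.smul_mem _ _ (Submodule.span_mono hsub hw)
  · exact Submodule.smul_mem _ _ (Submodule.subset_span hxa')

end AuxTri
end AuxTriangular

/-- Triangularity of the orthogonal basis: `ξ′_a − ξ_a` lies in the span of the basis
vectors indexed by half-diagrams with `p` arcs strictly below `a` in the
height-domination order. Here `ξ′_a` is realized as the vector obtained from any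
chain of box additions from the minimal half-diagram with `p` arcs to `a`. -/
theorem chainVec_triangular (n p : ℕ) (hp : 2 * p ≤ n) (q : ℝ)
    (hΔ : ∀ k : ℕ, 1 ≤ k → k ≤ n → Delta (k : ℤ) q ≠ 0)
    (a : HalfDiag n) (ha : a.arcs.card = p)
    (r : ℕ) (d : ℕ → HalfDiag n) (idx : ℕ → ℕ) (hd : IsChainTo p r d idx a) :
    chainVec q d idx r - xi a ∈ Submodule.span ℂ
      {v : V n | ∃ b : HalfDiag n, b.arcs.card = p ∧ b ≠ a ∧
        (∀ i ≤ n, ht b i ≤ ht a i) ∧ v = xi b} := by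
  classical
  obtain ⟨hmin, hdr, hstep⟩ := hd
  have key : ∀ k, k ≤ r → (d k).arcs.card = p ∧
      (chainVec q d idx k - xi (d k)) ∈ Submodule.span ℂ (AuxTri.lowSet p (d k)) := by
    intro k
    induction k with
    | zero =>
      intro _
      refine ⟨hmin.1, ?_⟩
      have h0 : chainVec q d idx 0 = xi (d 0) := rfl
      rw [h0, sub_self]
      exact Submodule.zero_mem _
    | succ k ih =>
      intro hk
      obtain ⟨hc, hm⟩ := ih (by omega)
      have hb := hstep k (by omega)
      have hs := AuxTri.step_main q ((mu (ht (d k) (idx (k + 1)) + 1) q : ℝ) : ℂ) p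
        (d k) (d (k + 1)) (idx (k + 1)) hb hc _ hm
      refine ⟨hs.1, ?_⟩
      have hch : chainVec q d idx (k + 1)
          = Eop (q : ℂ) n (idx (k + 1)) (chainVec q d idx k)
            - ((mu (ht (d k) (idx (k + 1)) + 1) q : ℝ) : ℂ) • chainVec q d idx k := rfl
      rw [hch]
      exact hs.2
  have hfin := (key r le_rfl).2
  rw [hdr] at hfin
  exact hfin
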